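/- arXiv:1203.1203 — 2 statements merged into one kernel-verified Lean document; each statement's English description precedes it below -/
import Mathlib

section
/- Let w be a trapezoidal word over {a,b}. If w is open, then H_w = R_w and K_w = L_w. If w is closed, then H_w = K_w and L_w = R_w. -/
open List

/-- Words over the two-letter alphabet {a,b}, encoded as lists of booleans
(`false` = a, `true` = b). -/
abbrev Word := List Bool

/-- The set of factors of `w` of length `n`. -/
def factorSet (w : Word) (n : ℕ) : Set Word :=
  {u | u.length = n ∧ u <:+: w}

/-- `w` is trapezoidal if it has at most `n+1` distinct factors of length `n`, for all `n`. -/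
def Trapezoidal (w : Word) : Prop :=
  ∀ n : ℕ, (factorSet w n).ncard ≤ n + 1

/-- `u` is a right special factor of `w`. -/
def RightSpecial (w u : Word) : Prop :=
  (u ++ [false]) <:+: w ∧ (u ++ [true]) <:+: w

/-- `u` is a left special factor of `w`. -/
def LeftSpecial (w u : Word) : Prop :=
  (false :: u) <:+: w ∧ (true :: u) <:+: w

/-- The number of occurrences of `u` as a factor of `w` (counted by starting position). -/
noncomputable def occ (u w : Word) : ℕ :=
  {i : ℕ | i + u.length ≤ w.length ∧ (w.drop i).take u.length = u}.ncard

/-- `H_w`: the minimal length of a prefix of `w` occurring exactly once in `w`. -/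
noncomputable def Hp (w : Word) : ℕ := sInf {n | n ≤ w.length ∧ occ (w.take n) w = 1}

/-- `K_w`: the minimal length of a suffix of `w` occurring exactly once in `w`. -/
noncomputable def Kp (w : Word) : ℕ := sInf {n | n ≤ w.length ∧ occ (w.drop (w.length - n)) w = 1}

/-- `R_w`: the minimal `n` such that `w` has no right special factor of length `n`. -/
noncomputable def Rp (w : Word) : ℕ := sInf {n | ∀ u : Word, u.length = n → ¬ RightSpecial w u}

/-- `L_w`: the minimal `n` such that `w` has no left special factor of length `n`. -/
noncomputable def Lp (w : Word) : ℕ := sInf {n | ∀ u : Word, u.length = n → ¬ LeftSpecial w u}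

/-- A word is closed if it is empty or has a factor, different from the word itself,
occurring exactly twice, as a prefix and as a suffix. -/
def ClosedWord (w : Word) : Prop :=
  w = [] ∨ ∃ u : Word, u ≠ w ∧ u <+: w ∧ u <:+ w ∧ occ u w = 2

/-- A binary word is balanced if any two factors of the same length have the same number
of occurrences of each letter, up to one. -/
def BalancedWord (w : Word) : Prop :=
  ∀ u v : Word, u <:+: w → v <:+: w → u.length = v.length →
    ∀ c : Bool, ((u.count c : ℤ) - (v.count c : ℤ)).natAbs ≤ 1

/-- `(f,g)` is a pathological pair of `w`. -/
def PathPair (w f g : Word) : Prop :=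
  f <:+: w ∧ g <:+: w ∧ f.length = g.length ∧
    2 ≤ ((f.count false : ℤ) - (g.count false : ℤ)).natAbs

/-- `p` is a period of `u`: `1 ≤ p ≤ |u|` and `u_i = u_{i+p}` whenever both sides are defined. -/
def HasPeriod (u : Word) (p : ℕ) : Prop :=
  1 ≤ p ∧ p ≤ u.length ∧ ∀ i : ℕ, i + p < u.length → u[i]? = u[i + p]?

/-- A word is central if it is empty or has two coprime periods `p`, `q`
with length `p + q - 2`. -/
def Central (u : Word) : Prop :=
  u = [] ∨ ∃ p q : ℕ, Nat.Coprime p q ∧ _root_.HasPeriod u p ∧ _root_.HasPeriod u q ∧ u.length + 2 = p + q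

/-! ### Infrastructure -/

namespace OCP

/-- The factor of `w` starting at `i` of length `n`. -/
def fac (w : Word) (i n : ℕ) : Word := (w.drop i).take n

lemma fac_length {w : Word} {i n : ℕ} (h : i + n ≤ w.length) : (fac w i n).length = n := by
  simp [fac]; omega

lemma fac_length_le (w : Word) (i n : ℕ) : (fac w i n).length ≤ n := by
  simp [fac]

/-- Occurrence positions of `u` in `w`, as a Finset. -/
def occFin (u w : Word) : Finset ℕ :=
  (Finset.range (w.length + 1)).filter
    (fun i => i + u.length ≤ w.length ∧ fac w i u.length = u)

lemma mem_occFin {u w : Word} {i : ℕ} :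
    i ∈ occFin u w ↔ i + u.length ≤ w.length ∧ fac w i u.length = u := by
  simp only [occFin, Finset.mem_filter, Finset.mem_range]
  constructor
  · rintro ⟨-, h⟩; exact h
  · rintro ⟨h1, h2⟩; exact ⟨by omega, h1, h2⟩

lemma occ_eq_card (u w : Word) : occ u w = (occFin u w).card := by
  rw [occ, ← Set.ncard_coe_finset]
  congr 1
  ext i
  simp only [Set.mem_setOf_eq, Finset.mem_coe, mem_occFin, fac]

lemma infix_iff_fac {u w : Word} :
    u <:+: w ↔ ∃ i, i + u.length ≤ w.length ∧ fac w i u.length = u := by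
  constructor
  · rintro ⟨s, t, rfl⟩
    refine ⟨s.length, ?_, ?_⟩
    · simp only [List.length_append]; omega
    · rw [fac, show s ++ u ++ t = s ++ (u ++ t) by simp, List.drop_left, List.take_left]
  · rintro ⟨i, h1, h2⟩
    refine ⟨w.take i, (w.drop i).drop u.length, ?_⟩
    have key : u ++ (w.drop i).drop u.length = w.drop i := by
      have h3 : (w.drop i).take u.length ++ (w.drop i).drop u.length = w.drop i :=
        List.take_append_drop _ _
      rwa [show (w.drop i).take u.length = u from h2] at h3
    rw [List.append_assoc, key, List.take_append_drop]

lemma infix_iff_occFin {u w : Word} : u <:+: w ↔ (occFin u w).Nonempty := by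
  rw [infix_iff_fac]
  constructor
  · rintro ⟨i, h⟩; exact ⟨i, mem_occFin.2 h⟩
  · rintro ⟨i, h⟩; exact ⟨i, mem_occFin.1 h⟩

lemma fac_infix (w : Word) (i n : ℕ) : fac w i n <:+: w :=
  ((w.drop i).take_prefix n).isInfix.trans (w.drop_suffix i).isInfix

lemma occ_pos_iff {u w : Word} : 0 < occ u w ↔ u <:+: w := by
  rw [occ_eq_card, Finset.card_pos, ← infix_iff_occFin]

/-- The factor Finset. -/
def facFin (w : Word) (n : ℕ) : Finset Word :=
  (Finset.range (w.length + 1)).image (fun i => fac w i n) |>.filter (fun u => u.length = n)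

lemma mem_facFin {w u : Word} {n : ℕ} :
    u ∈ facFin w n ↔ u.length = n ∧ u <:+: w := by
  simp only [facFin, Finset.mem_filter, Finset.mem_image, Finset.mem_range]
  constructor
  · rintro ⟨⟨i, hi, rfl⟩, hlen⟩
    exact ⟨hlen, fac_infix w i n⟩
  · rintro ⟨hlen, hinf⟩
    obtain ⟨i, h1, h2⟩ := infix_iff_fac.1 hinf
    rw [hlen] at h1 h2
    exact ⟨⟨i, by omega, h2⟩, hlen⟩

lemma factorSet_eq_coe (w : Word) (n : ℕ) : factorSet w n = ↑(facFin w n) := by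
  ext u; simp [factorSet, mem_facFin]

lemma facFin_card_eq (w : Word) (n : ℕ) : (factorSet w n).ncard = (facFin w n).card := by
  rw [factorSet_eq_coe, Set.ncard_coe_finset]

end OCP

namespace OCP

lemma fac_zero (w : Word) (n : ℕ) : fac w 0 n = w.take n := by simp [fac]

lemma fac_self (w : Word) : fac w 0 w.length = w := by
  simp [fac]

lemma fac_suffix_eq {w : Word} {n : ℕ} (h : n ≤ w.length) :
    fac w (w.length - n) n = w.drop (w.length - n) := by
  rw [fac]
  have hl : (w.drop (w.length - n)).length ≤ n := by
    rw [List.length_drop]; omega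
  exact List.take_of_length_le hl

lemma fac_succ {w : Word} {i n : ℕ} (h : i + n < w.length) :
    fac w i (n + 1) = fac w i n ++ [w[i + n]] := by
  rw [fac, fac, List.take_succ]
  congr
  have h1 : (w.drop i)[n]? = w[i + n]? := List.getElem?_drop ..
  have h2 : w[i + n]? = some w[i + n] := List.getElem?_eq_getElem h
  rw [h1, h2]
  rfl

lemma fac_cons {w : Word} {i : ℕ} (n : ℕ) (h : i < w.length) :
    fac w i (n + 1) = w[i] :: fac w (i + 1) n := by
  rw [fac, fac, List.drop_eq_getElem_cons h, List.take_succ_cons]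

lemma fac_fac {w v : Word} {i L t s : ℕ} (hv : fac w i L = v) (hts : t + s ≤ L) :
    fac w (i + t) s = fac v t s := by
  rw [← hv, fac, fac, fac, List.drop_take, List.drop_drop, List.take_take]
  congr 1
  omega

lemma mem_occFin_of_prefix {u v w : Word} {i : ℕ} (hp : v <+: u) (h : i ∈ occFin u w) :
    i ∈ occFin v w := by
  rw [mem_occFin] at h ⊢
  obtain ⟨t, rfl⟩ := hp
  refine ⟨by simp at h ⊢; omega, ?_⟩
  have : fac w i v.length = fac (v ++ t) 0 v.length := by
    have := fac_fac (w := w) (i := i) h.2 (t := 0) (s := v.length) (by simp)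
    simpa using this
  rw [this, fac_zero, List.take_left]

lemma mem_occFin_of_suffix {u v w : Word} {i : ℕ} (hs : v <:+ u) (h : i ∈ occFin u w) :
    i + (u.length - v.length) ∈ occFin v w := by
  rw [mem_occFin] at h ⊢
  obtain ⟨t, rfl⟩ := hs
  have hlen : (t ++ v).length = t.length + v.length := by simp
  have hd : (t ++ v).length - v.length = t.length := by omega
  rw [hd]
  refine ⟨by omega, ?_⟩
  have h2 : fac w (i + t.length) v.length = fac (t ++ v) t.length v.length :=
    fac_fac h.2 (by omega)
  rw [h2, fac, List.drop_left]
  exact List.take_of_length_le (le_refl _)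

lemma occ_card_le_of_suffix {u v w : Word} (hs : v <:+ u) :
    (occFin u w).card ≤ (occFin v w).card := by
  apply Finset.card_le_card_of_injOn (fun i => i + (u.length - v.length))
  · intro i hi; exact mem_occFin_of_suffix hs hi
  · intro a _ b _ h; simp only at h; omega

lemma occ_self (w : Word) : occ w w = 1 := by
  rw [occ_eq_card]
  have : occFin w w = {0} := by
    ext i
    rw [mem_occFin, Finset.mem_singleton]
    constructor
    · rintro ⟨h1, -⟩; omega
    · rintro rfl; exact ⟨by omega, fac_self w⟩
  rw [this, Finset.card_singleton]

lemma occ_ge_one {u w : Word} (h : u <:+: w) : 1 ≤ occ u w := by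
  rw [occ_eq_card, Nat.one_le_iff_ne_zero, ← Nat.pos_iff_ne_zero, Finset.card_pos]
  exact infix_iff_occFin.1 h

end OCP

namespace OCP

variable {w : Word}

/-! ### H and K -/

lemma Hset_top (w : Word) : w.length ∈ {n | n ≤ w.length ∧ occ (w.take n) w = 1} :=
  ⟨le_refl _, by rw [List.take_length]; exact occ_self w⟩

lemma Hp_le_length (w : Word) : Hp w ≤ w.length := Nat.sInf_le (Hset_top w)

lemma Hp_spec (w : Word) : Hp w ≤ w.length ∧ occ (w.take (Hp w)) w = 1 :=
  Nat.sInf_mem ⟨_, Hset_top w⟩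

lemma zero_mem_occFin_take {n : ℕ} (h : n ≤ w.length) : 0 ∈ occFin (w.take n) w := by
  rw [mem_occFin]
  have hlen : (w.take n).length = n := by rw [List.length_take]; omega
  rw [hlen, fac_zero]
  exact ⟨by omega, rfl⟩

lemma occ_take_eq_one {n : ℕ} (h1 : Hp w ≤ n) (h2 : n ≤ w.length) :
    occ (w.take n) w = 1 := by
  induction n, h1 using Nat.le_induction with
  | base => exact (Hp_spec w).2
  | succ m hm ih =>
    have ih1 := ih (by omega)
    have hpref : w.take m <+: w.take (m + 1) := by
      have he : w.take m = (w.take (m + 1)).take m := by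
        rw [List.take_take]
        congr 1
        omega
      rw [he]
      exact List.take_prefix _ _
    have hsub : occFin (w.take (m + 1)) w ⊆ occFin (w.take m) w :=
      fun i hi => mem_occFin_of_prefix hpref hi
    have hle : (occFin (w.take (m + 1)) w).card ≤ 1 := by
      have := Finset.card_le_card hsub
      rw [← occ_eq_card, ← occ_eq_card, ih1] at this
      rw [occ_eq_card] at this
      exact this
    have hge : 0 < (occFin (w.take (m + 1)) w).card :=
      Finset.card_pos.2 ⟨0, zero_mem_occFin_take h2⟩
    rw [occ_eq_card]
    omega

lemma occ_take_ge_two {n : ℕ} (h1 : n < Hp w) (h2 : n ≤ w.length) :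
    2 ≤ occ (w.take n) w := by
  have hne := Nat.notMem_of_lt_sInf (s := {n | n ≤ w.length ∧ occ (w.take n) w = 1}) h1
  simp only [Set.mem_setOf_eq, not_and] at hne
  have h3 := hne h2
  have h4 : 1 ≤ occ (w.take n) w := occ_ge_one (w.take_prefix n).isInfix
  omega

lemma Kset_top (w : Word) : w.length ∈ {n | n ≤ w.length ∧ occ (w.drop (w.length - n)) w = 1} :=
  ⟨le_refl _, by rw [Nat.sub_self, List.drop_zero]; exact occ_self w⟩

lemma Kp_le_length (w : Word) : Kp w ≤ w.length := Nat.sInf_le (Kset_top w)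

lemma Kp_spec (w : Word) : Kp w ≤ w.length ∧ occ (w.drop (w.length - Kp w)) w = 1 :=
  Nat.sInf_mem ⟨_, Kset_top w⟩

lemma suffix_mem_occFin {n : ℕ} (h : n ≤ w.length) :
    w.length - n ∈ occFin (w.drop (w.length - n)) w := by
  rw [mem_occFin]
  have hlen : (w.drop (w.length - n)).length = n := by rw [List.length_drop]; omega
  rw [hlen]
  exact ⟨by omega, fac_suffix_eq h⟩

lemma occ_drop_eq_one {n : ℕ} (h1 : Kp w ≤ n) (h2 : n ≤ w.length) :
    occ (w.drop (w.length - n)) w = 1 := by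
  induction n, h1 using Nat.le_induction with
  | base => exact (Kp_spec w).2
  | succ m hm ih =>
    have ih1 := ih (by omega)
    have hidx : w.length - (m + 1) < w.length := by omega
    have hcons : w.drop (w.length - (m + 1)) =
        w[w.length - (m + 1)] :: w.drop (w.length - m) := by
      have e1 : w.length - (m + 1) + 1 = w.length - m := by omega
      rw [List.drop_eq_getElem_cons hidx, e1]
    have hsuf : w.drop (w.length - m) <:+ w.drop (w.length - (m + 1)) := by
      rw [hcons]
      exact List.suffix_cons _ _
    have hle : (occFin (w.drop (w.length - (m + 1))) w).card ≤ 1 := by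
      have := occ_card_le_of_suffix (w := w) hsuf
      rw [← occ_eq_card, ← occ_eq_card, ih1] at this
      rw [occ_eq_card] at this
      exact this
    have hmem := suffix_mem_occFin (w := w) (n := m + 1) (by omega : m + 1 ≤ w.length)
    have hge : 0 < (occFin (w.drop (w.length - (m + 1))) w).card :=
      Finset.card_pos.2 ⟨_, hmem⟩
    rw [occ_eq_card]
    omega

lemma occ_drop_ge_two {n : ℕ} (h1 : n < Kp w) (h2 : n ≤ w.length) :
    2 ≤ occ (w.drop (w.length - n)) w := by
  have hne := Nat.notMem_of_lt_sInf
    (s := {n | n ≤ w.length ∧ occ (w.drop (w.length - n)) w = 1}) h1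
  simp only [Set.mem_setOf_eq, not_and] at hne
  have h3 := hne h2
  have h4 : 1 ≤ occ (w.drop (w.length - n)) w := occ_ge_one (w.drop_suffix _).isInfix
  omega

/-! ### R and L -/

lemma infix_of_cons {a : Bool} {x w : Word} (h : (a :: x) <:+: w) : x <:+: w :=
  (List.suffix_cons a x).isInfix.trans h

lemma rs_tail {u : Word} (h : RightSpecial w u) (hne : u ≠ []) :
    RightSpecial w u.tail := by
  obtain ⟨a, u', rfl⟩ := List.exists_cons_of_ne_nil hne
  exact ⟨infix_of_cons (by simpa using h.1), infix_of_cons (by simpa using h.2)⟩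

lemma ls_dropLast {u : Word} (h : LeftSpecial w u) (hne : u ≠ []) :
    LeftSpecial w u.dropLast := by
  have hp : u.dropLast <+: u := List.dropLast_prefix u
  constructor
  · exact ((List.cons_prefix_cons.2 ⟨rfl, hp⟩).isInfix).trans h.1
  · exact ((List.cons_prefix_cons.2 ⟨rfl, hp⟩).isInfix).trans h.2

lemma Rset_top (w : Word) :
    w.length ∈ {n | ∀ u : Word, u.length = n → ¬ RightSpecial w u} := by
  intro u hlen hRS
  have := hRS.1.length_le
  rw [List.length_append, hlen] at this
  simp at this

lemma Rp_le_length (w : Word) : Rp w ≤ w.length := Nat.sInf_le (Rset_top w)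

lemma no_rs_of_Rp_le {n : ℕ} (h : Rp w ≤ n) :
    ∀ u : Word, u.length = n → ¬ RightSpecial w u := by
  induction n, h using Nat.le_induction with
  | base => exact Nat.sInf_mem ⟨_, Rset_top w⟩
  | succ m hm ih =>
    intro u hlen hRS
    have hne : u ≠ [] := by intro h; rw [h] at hlen; simp at hlen
    exact ih u.tail (by rw [List.length_tail, hlen]; omega) (rs_tail hRS hne)

lemma rs_length_lt {u : Word} (h : RightSpecial w u) : u.length < Rp w := by
  by_contra hc
  exact no_rs_of_Rp_le (by omega) u rfl h

lemma exists_rs_of_lt {n : ℕ} (h : n < Rp w) :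
    ∃ u : Word, u.length = n ∧ RightSpecial w u := by
  have := Nat.notMem_of_lt_sInf (s := {n | ∀ u : Word, u.length = n → ¬ RightSpecial w u}) h
  simp only [Set.mem_setOf_eq, not_forall] at this
  obtain ⟨u, hu, hRS⟩ := this
  exact ⟨u, hu, not_not.1 hRS⟩

lemma Lset_top (w : Word) :
    w.length ∈ {n | ∀ u : Word, u.length = n → ¬ LeftSpecial w u} := by
  intro u hlen hLS
  have := hLS.1.length_le
  rw [List.length_cons, hlen] at this
  omega

lemma Lp_le_length (w : Word) : Lp w ≤ w.length := Nat.sInf_le (Lset_top w)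

lemma no_ls_of_Lp_le {n : ℕ} (h : Lp w ≤ n) :
    ∀ u : Word, u.length = n → ¬ LeftSpecial w u := by
  induction n, h using Nat.le_induction with
  | base => exact Nat.sInf_mem ⟨_, Lset_top w⟩
  | succ m hm ih =>
    intro u hlen hLS
    have hne : u ≠ [] := by intro h; rw [h] at hlen; simp at hlen
    exact ih u.dropLast (by rw [List.length_dropLast, hlen]; omega) (ls_dropLast hLS hne)

lemma ls_length_lt {u : Word} (h : LeftSpecial w u) : u.length < Lp w := by
  by_contra hc
  exact no_ls_of_Lp_le (by omega) u rfl h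

lemma exists_ls_of_lt {n : ℕ} (h : n < Lp w) :
    ∃ u : Word, u.length = n ∧ LeftSpecial w u := by
  have := Nat.notMem_of_lt_sInf (s := {n | ∀ u : Word, u.length = n → ¬ LeftSpecial w u}) h
  simp only [Set.mem_setOf_eq, not_forall] at this
  obtain ⟨u, hu, hLS⟩ := this
  exact ⟨u, hu, not_not.1 hLS⟩

/-! ### occurrences of special factors -/

instance (w u : Word) : Decidable (RightSpecial w u) := by
  unfold RightSpecial; infer_instance

instance (w u : Word) : Decidable (LeftSpecial w u) := by
  unfold LeftSpecial; infer_instance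

lemma rs_infix {u : Word} (h : RightSpecial w u) : u <:+: w :=
  (List.prefix_append u [false]).isInfix.trans h.1

lemma ls_infix {u : Word} (h : LeftSpecial w u) : u <:+: w :=
  infix_of_cons h.1

lemma rs_occ_two {u : Word} (h : RightSpecial w u) : 2 ≤ occ u w := by
  obtain ⟨i, hi⟩ := infix_iff_occFin.1 h.1
  obtain ⟨j, hj⟩ := infix_iff_occFin.1 h.2
  have hij : i ≠ j := by
    rintro rfl
    have h1 := (mem_occFin.1 hi).2
    have h2 := (mem_occFin.1 hj).2
    have : (u ++ [false]).length = (u ++ [true]).length := by simp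
    rw [this] at h1
    rw [h1] at h2
    simp at h2
  have hi' : i ∈ occFin u w := mem_occFin_of_prefix (List.prefix_append u [false]) hi
  have hj' : j ∈ occFin u w := mem_occFin_of_prefix (List.prefix_append u [true]) hj
  rw [occ_eq_card]
  exact Finset.one_lt_card.2 ⟨i, hi', j, hj', hij⟩

lemma ls_occ_two {u : Word} (h : LeftSpecial w u) : 2 ≤ occ u w := by
  obtain ⟨i, hi⟩ := infix_iff_occFin.1 h.1
  obtain ⟨j, hj⟩ := infix_iff_occFin.1 h.2
  have hij : i ≠ j := by
    rintro rfl
    have h1 := (mem_occFin.1 hi).2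
    have h2 := (mem_occFin.1 hj).2
    have : (false :: u).length = (true :: u).length := by simp
    rw [this] at h1
    rw [h1] at h2
    simp at h2
  have hsuf : u <:+ (false :: u) := List.suffix_cons _ _
  have hsuf2 : u <:+ (true :: u) := List.suffix_cons _ _
  have hi' := mem_occFin_of_suffix hsuf hi
  have hj' := mem_occFin_of_suffix hsuf2 hj
  have hlen : (false :: u).length - u.length = 1 := by simp
  have hlen2 : (true :: u).length - u.length = 1 := by simp
  rw [hlen] at hi'
  rw [hlen2] at hj'
  rw [occ_eq_card]
  exact Finset.one_lt_card.2 ⟨i + 1, hi', j + 1, hj', by omega⟩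

end OCP

namespace OCP

variable {w : Word}

/-- Right special factors of length `n`, as a Finset. -/
def RSFin (w : Word) (n : ℕ) : Finset Word := (facFin w n).filter (fun u => RightSpecial w u)

/-- Non-right-extendable factors of length `n`. -/
def NEFin (w : Word) (n : ℕ) : Finset Word :=
  (facFin w n).filter (fun u => ¬ (u ++ [false]) <:+: w ∧ ¬ (u ++ [true]) <:+: w)

lemma mem_RSFin {u : Word} {n : ℕ} :
    u ∈ RSFin w n ↔ u.length = n ∧ RightSpecial w u := by
  rw [RSFin, Finset.mem_filter, mem_facFin]
  constructor
  · rintro ⟨⟨h1, h2⟩, h3⟩; exact ⟨h1, h3⟩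
  · rintro ⟨h1, h3⟩; exact ⟨⟨h1, rs_infix h3⟩, h3⟩

lemma facFin_zero (w : Word) : facFin w 0 = {([] : Word)} := by
  ext u
  rw [mem_facFin, Finset.mem_singleton]
  constructor
  · rintro ⟨h1, -⟩; exact List.eq_nil_of_length_eq_zero h1
  · rintro rfl; exact ⟨rfl, List.nil_infix⟩

lemma facFin_empty_of_lt {n : ℕ} (h : w.length < n) : facFin w n = ∅ := by
  ext u
  simp only [mem_facFin, Finset.notMem_empty, iff_false, not_and]
  intro h1 h2
  have := h2.length_le
  omega

/-- The fundamental counting identity. -/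
lemma count_identity (w : Word) (n : ℕ) :
    (facFin w (n + 1)).card + (NEFin w n).card = (facFin w n).card + (RSFin w n).card := by
  classical
  set A : Bool → Finset Word := fun c => (facFin w n).filter (fun u => (u ++ [c]) <:+: w) with hA
  -- step 1 : decomposition of factors of length n+1
  have hdecomp : facFin w (n + 1) =
      (A false).image (fun u => u ++ [false]) ∪ (A true).image (fun u => u ++ [true]) := by
    ext v
    rw [Finset.mem_union, mem_facFin]
    constructor
    · rintro ⟨hlen, hinf⟩
      have hne : v ≠ [] := by intro h; rw [h] at hlen; simp at hlen
      have hsplit : v.dropLast ++ [v.getLast hne] = v := List.dropLast_append_getLast hne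
      have hmem : v.dropLast ∈ A (v.getLast hne) := by
        rw [hA, Finset.mem_filter, mem_facFin]
        refine ⟨⟨by rw [List.length_dropLast, hlen]; omega, ?_⟩, ?_⟩
        · exact (List.dropLast_prefix v).isInfix.trans hinf
        · rw [hsplit]; exact hinf
      cases hc : v.getLast hne with
      | false =>
        left; exact Finset.mem_image.2 ⟨v.dropLast, by rw [← hc]; exact hmem, by rw [← hc]; exact hsplit⟩
      | true =>
        right; exact Finset.mem_image.2 ⟨v.dropLast, by rw [← hc]; exact hmem, by rw [← hc]; exact hsplit⟩
    · rintro (hv | hv) <;>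
      · obtain ⟨u, hu, rfl⟩ := Finset.mem_image.1 hv
        rw [hA, Finset.mem_filter, mem_facFin] at hu
        exact ⟨by simp [hu.1.1], hu.2⟩
  -- step 2 : the images are disjoint
  have hdisj : Disjoint ((A false).image (fun u => u ++ [false]))
      ((A true).image (fun u => u ++ [true])) := by
    rw [Finset.disjoint_left]
    rintro x hx hy
    obtain ⟨a, -, rfl⟩ := Finset.mem_image.1 hx
    obtain ⟨b, -, hba⟩ := Finset.mem_image.1 hy
    have h1 : (b ++ [true]).getLast? = some true := List.getLast?_concat
    rw [hba] at h1
    rw [List.getLast?_concat] at h1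
    simp at h1
  -- step 3 : cards of images
  have hinjf : ((A false).image (fun u => u ++ [false])).card = (A false).card :=
    Finset.card_image_of_injective _ (fun a b h => by simpa using h)
  have hinjt : ((A true).image (fun u => u ++ [true])).card = (A true).card :=
    Finset.card_image_of_injective _ (fun a b h => by simpa using h)
  have hcard1 : (facFin w (n + 1)).card = (A false).card + (A true).card := by
    rw [hdecomp, Finset.card_union_of_disjoint hdisj, hinjf, hinjt]
  -- step 4 : union / intersection
  have hcard2 : (A false ∪ A true).card + (A false ∩ A true).card
      = (A false).card + (A true).card := Finset.card_union_add_card_inter _ _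
  -- step 5 : intersection is RSFin
  have hinter : A false ∩ A true = RSFin w n := by
    ext u
    rw [Finset.mem_inter, hA, RSFin, Finset.mem_filter, Finset.mem_filter, Finset.mem_filter]
    constructor
    · rintro ⟨⟨h1, h2⟩, ⟨-, h3⟩⟩; exact ⟨h1, h2, h3⟩
    · rintro ⟨h1, h2, h3⟩; exact ⟨⟨h1, h2⟩, ⟨h1, h3⟩⟩
  -- step 6 : union is facFin minus NEFin
  have hunion : A false ∪ A true = facFin w n \ NEFin w n := by
    ext u
    rw [Finset.mem_union, Finset.mem_sdiff, hA, NEFin, Finset.mem_filter, Finset.mem_filter,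
      Finset.mem_filter]
    constructor
    · rintro (⟨h1, h2⟩ | ⟨h1, h2⟩)
      · exact ⟨h1, fun hc => (hc.2.1 h2)⟩
      · exact ⟨h1, fun hc => (hc.2.2 h2)⟩
    · rintro ⟨h1, h2⟩
      by_cases hf : (u ++ [false]) <:+: w
      · exact Or.inl ⟨h1, hf⟩
      · by_cases ht : (u ++ [true]) <:+: w
        · exact Or.inr ⟨h1, ht⟩
        · exact absurd ⟨h1, hf, ht⟩ h2
  have hsub : NEFin w n ⊆ facFin w n := Finset.filter_subset _ _
  have hcard3 : (facFin w n \ NEFin w n).card = (facFin w n).card - (NEFin w n).card :=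
    Finset.card_sdiff_of_subset hsub
  have hle : (NEFin w n).card ≤ (facFin w n).card := Finset.card_le_card hsub
  rw [hcard1, ← hcard2, hunion, hinter, hcard3]
  omega

lemma suffix_eq_drop {x y : Word} (h : x <:+ y) : x = y.drop (y.length - x.length) := by
  obtain ⟨s, rfl⟩ := h
  have : (s ++ x).length - x.length = s.length := by simp
  rw [this, List.drop_left]

/-- Non-extendable factors are the final suffix occurring once. -/
lemma mem_NEFin_eq {u : Word} {n : ℕ} (h : u ∈ NEFin w n) :
    u = w.drop (w.length - n) ∧ occ u w = 1 := by
  rw [NEFin, Finset.mem_filter, mem_facFin] at h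
  obtain ⟨⟨hlen, hinf⟩, hnf, hnt⟩ := h
  have hnN : n ≤ w.length := hlen ▸ hinf.length_le
  have hocc : occFin u w = {w.length - n} := by
    apply Finset.Subset.antisymm
    · intro i hi
      rw [mem_occFin, hlen] at hi
      rw [Finset.mem_singleton]
      by_contra hne
      have hlt : i + n < w.length := by omega
      have hext : fac w i (n + 1) = u ++ [w[i + n]] := by
        rw [fac_succ hlt, hi.2]
      have : (u ++ [w[i + n]]) <:+: w := hext ▸ fac_infix w i (n + 1)
      cases hc : w[i + n] with
      | false => rw [hc] at this; exact hnf this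
      | true => rw [hc] at this; exact hnt this
    · intro i hi
      rw [Finset.mem_singleton] at hi
      subst hi
      obtain ⟨j, hj⟩ := infix_iff_occFin.1 hinf
      have hj' := mem_occFin.1 hj
      rw [hlen] at hj'
      -- every occurrence ends at the end, so j = w.length - n and u is the suffix
      have : j = w.length - n := by
        by_contra hne
        have hlt : j + n < w.length := by omega
        have hext : fac w j (n + 1) = u ++ [w[j + n]] := by
          rw [fac_succ hlt, hj'.2]
        have : (u ++ [w[j + n]]) <:+: w := hext ▸ fac_infix w j (n + 1)
        cases hc : w[j + n] with
        | false => rw [hc] at this; exact hnf this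
        | true => rw [hc] at this; exact hnt this
      rw [← this]
      exact hj
  constructor
  · have : w.length - n ∈ occFin u w := by rw [hocc]; exact Finset.mem_singleton_self _
    rw [mem_occFin, hlen] at this
    rw [← this.2, fac_suffix_eq hnN]
  · rw [occ_eq_card, hocc, Finset.card_singleton]

lemma NEFin_eq_empty {n : ℕ} (h : n < Kp w) : NEFin w n = ∅ := by
  rw [Finset.eq_empty_iff_forall_notMem]
  intro u hu
  obtain ⟨hequ, hocc⟩ := mem_NEFin_eq hu
  have hnN : n ≤ w.length := by
    rw [NEFin, Finset.mem_filter, mem_facFin] at hu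
    exact hu.1.1 ▸ hu.1.2.length_le
  have := occ_drop_ge_two h hnN
  rw [← hequ, hocc] at this
  omega

lemma NEFin_eq_singleton {n : ℕ} (h1 : Kp w ≤ n) (h2 : n ≤ w.length) :
    NEFin w n = {w.drop (w.length - n)} := by
  apply Finset.Subset.antisymm
  · intro u hu
    rw [Finset.mem_singleton]
    exact (mem_NEFin_eq hu).1
  · intro u hu
    rw [Finset.mem_singleton] at hu
    subst hu
    have hocc1 : occ (w.drop (w.length - n)) w = 1 := occ_drop_eq_one h1 h2
    rw [NEFin, Finset.mem_filter, mem_facFin]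
    have hlen : (w.drop (w.length - n)).length = n := by rw [List.length_drop]; omega
    refine ⟨⟨hlen, (w.drop_suffix _).isInfix⟩, ?_, ?_⟩ <;>
    · intro hinf
      obtain ⟨i, hi⟩ := infix_iff_occFin.1 hinf
      have hi2 : i ∈ occFin (w.drop (w.length - n)) w :=
        mem_occFin_of_prefix (List.prefix_append _ _) hi
      have hi3 : i + (n + 1) ≤ w.length := by
        have := (mem_occFin.1 hi).1
        simpa [hlen] using this
      have hsufmem := suffix_mem_occFin (w := w) h2
      have hne : i ≠ w.length - n := by omega
      have : 2 ≤ occ (w.drop (w.length - n)) w := by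
        rw [occ_eq_card]
        exact Finset.one_lt_card.2 ⟨i, hi2, _, hsufmem, hne⟩
      omega

lemma NEFin_card (w : Word) (n : ℕ) :
    (NEFin w n).card = if Kp w ≤ n ∧ n ≤ w.length then 1 else 0 := by
  split_ifs with h
  · rw [NEFin_eq_singleton h.1 h.2, Finset.card_singleton]
  · rcases le_or_gt (Kp w) n with h1 | h1
    · have h2 : w.length < n := by
        rcases le_or_gt n w.length with h3 | h3
        · exact absurd ⟨h1, h3⟩ h
        · exact h3
      have : NEFin w n ⊆ facFin w n := Finset.filter_subset _ _
      rw [facFin_empty_of_lt h2] at this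
      rw [Finset.subset_empty.1 this, Finset.card_empty]
    · rw [NEFin_eq_empty h1, Finset.card_empty]

/-- Telescoping identity. -/
lemma telescope (w : Word) (m : ℕ) :
    (facFin w m).card + (∑ n ∈ Finset.range m, (NEFin w n).card)
      = 1 + ∑ n ∈ Finset.range m, (RSFin w n).card := by
  induction m with
  | zero => simp [facFin_zero]
  | succ m ih =>
    rw [Finset.sum_range_succ, Finset.sum_range_succ]
    have := count_identity w m
    omega

lemma sum_NEFin (w : Word) {m : ℕ} (hm : m ≤ w.length + 1) :
    ∑ n ∈ Finset.range m, (NEFin w n).card = m - Kp w := by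
  have hcong : ∀ n ∈ Finset.range m, (NEFin w n).card = if Kp w ≤ n then 1 else 0 := by
    intro n hn
    rw [Finset.mem_range] at hn
    rw [NEFin_card]
    rcases le_or_gt (Kp w) n with h | h
    · rw [if_pos ⟨h, by omega⟩, if_pos h]
    · rw [if_neg (fun hc => absurd hc.1 (by omega)), if_neg (by omega)]
  rw [Finset.sum_congr rfl hcong, ← Finset.card_filter]
  have : (Finset.range m).filter (fun n => Kp w ≤ n) = Finset.Ico (Kp w) m := by
    ext n
    simp only [Finset.mem_filter, Finset.mem_range, Finset.mem_Ico]
    tauto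
  rw [this, Nat.card_Ico]

lemma sum_RSFin_ge (w : Word) {m : ℕ} (hm : m ≤ Rp w) :
    m ≤ ∑ n ∈ Finset.range m, (RSFin w n).card := by
  calc m = ∑ _n ∈ Finset.range m, 1 := by rw [Finset.sum_const, Finset.card_range, smul_eq_mul, mul_one]
  _ ≤ ∑ n ∈ Finset.range m, (RSFin w n).card := by
      apply Finset.sum_le_sum
      intro n hn
      rw [Finset.mem_range] at hn
      rw [Nat.one_le_iff_ne_zero, ← Nat.pos_iff_ne_zero, Finset.card_pos]
      obtain ⟨u, hu1, hu2⟩ := exists_rs_of_lt (w := w) (n := n) (by omega)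
      exact ⟨u, mem_RSFin.2 ⟨hu1, hu2⟩⟩

/-- lower bound for factor counts below min(R,K) -/
lemma f_lower {m : ℕ} (h1 : m ≤ Rp w) (h2 : m ≤ Kp w) :
    m + 1 ≤ (facFin w m).card := by
  have ht := telescope w m
  have hNE : ∑ n ∈ Finset.range m, (NEFin w n).card = 0 := by
    apply Finset.sum_eq_zero
    intro n hn
    rw [Finset.mem_range] at hn
    rw [NEFin_eq_empty (by omega), Finset.card_empty]
  have hRS := sum_RSFin_ge w h1
  omega

/-- lower bound for factor counts in the middle regime -/
lemma f_lower_mid {m : ℕ} (h1 : m ≤ Rp w) (hm : m ≤ w.length + 1) (hK : Kp w ≤ m) :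
    Kp w + 1 ≤ (facFin w m).card := by
  have ht := telescope w m
  have hNE := sum_NEFin w hm
  have hRS := sum_RSFin_ge w h1
  omega

end OCP

namespace OCP

lemma trap_card {w : Word} (h : Trapezoidal w) (n : ℕ) : (facFin w n).card ≤ n + 1 := by
  have := h n
  rwa [facFin_card_eq] at this

lemma trap_of_concat {w : Word} {c : Bool} (h : Trapezoidal (w ++ [c])) : Trapezoidal w := by
  intro n
  refine le_trans ?_ (h n)
  apply Set.ncard_le_ncard
  · intro u hu
    exact ⟨hu.1, hu.2.trans (List.prefix_append w [c]).isInfix⟩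
  · rw [factorSet_eq_coe]
    exact (facFin (w ++ [c]) n).finite_toSet

lemma infix_concat {u w : Word} {c : Bool} (h : u <:+: (w ++ [c])) :
    u <:+: w ∨ u <:+ (w ++ [c]) := by
  obtain ⟨s, t, hst⟩ := h
  rcases List.eq_nil_or_concat t with rfl | ⟨t', d, rfl⟩
  · right
    exact ⟨s, by simpa using hst⟩
  · left
    have hst' : (s ++ u ++ t') ++ [d] = w ++ [c] := by
      rw [← hst, List.concat_eq_append]
      simp
    have := List.append_inj' hst' rfl
    exact ⟨s, t', this.1⟩

lemma suffix_concat {x w : Word} {d c : Bool} (h : (x ++ [d]) <:+ (w ++ [c])) :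
    d = c ∧ x <:+ w := by
  obtain ⟨s, hs⟩ := h
  have hs' : (s ++ x) ++ [d] = w ++ [c] := by rw [← hs]; simp
  have := List.append_inj' hs' rfl
  refine ⟨by simpa using this.2, s, this.1⟩

/-- A right special factor in `w ++ [c]` which is not right special in `w`
is the suffix of `w` of its length, and its extension by `c` is fresh. -/
lemma new_rs {w x : Word} {c : Bool} (hx : RightSpecial (w ++ [c]) x)
    (hx' : ¬ RightSpecial w x) :
    x = w.drop (w.length - x.length) ∧ (x ++ [c]) <:+ (w ++ [c]) ∧ ¬ (x ++ [c]) <:+: w := by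
  -- one of the extensions is not a factor of w
  have hmiss : ∃ d : Bool, ¬ (x ++ [d]) <:+: w := by
    by_contra hcon
    push_neg at hcon
    exact hx' ⟨hcon false, hcon true⟩
  obtain ⟨d, hd⟩ := hmiss
  have hxd : (x ++ [d]) <:+: (w ++ [c]) := by cases d; exacts [hx.1, hx.2]
  have hsuf : (x ++ [d]) <:+ (w ++ [c]) := by
    rcases infix_concat hxd with h | h
    · exact absurd h hd
    · exact h
  obtain ⟨rfl, hxw⟩ := suffix_concat hsuf
  refine ⟨?_, hsuf, hd⟩
  exact suffix_eq_drop hxw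

/-- Gap A : a trapezoidal word has at most one right special factor of each length. -/
theorem rs_unique : ∀ (w : Word), Trapezoidal w →
    ∀ (u v : Word), u.length = v.length → RightSpecial w u → RightSpecial w v → u = v := by
  intro w
  induction w using List.reverseRecOn with
  | nil =>
    intro _ u v _ hu _
    have := hu.1.length_le
    simp at this
  | append_singleton w c ih =>
    intro htrap u v hlen hu hv
    by_contra hne
    have htrap' := trap_of_concat htrap
    -- auxiliary: the contradiction when u is RS in w and v is not
    have aux : ∀ u v : Word, u.length = v.length → RightSpecial (w ++ [c]) v →
        u ≠ v → RightSpecial w u → ¬ RightSpecial w v → False := by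
      clear hlen hu hv hne u v
      intro u v hlen hv hne hu' hv'
      obtain ⟨hveq, hvsuf, hvfresh⟩ := new_rs hv hv'
      set n := u.length with hn
      -- n < Rp w
      have hR : n < Rp w := rs_length_lt hu'
      have hRN := Rp_le_length w
      have hnN : n ≤ w.length := by omega
      -- the other extension of v is a factor of w
      have hother : (v ++ [!c]) <:+: w := by
        have hinf : (v ++ [!c]) <:+: (w ++ [c]) := by cases c; exacts [hv.2, hv.1]
        rcases infix_concat hinf with h | h
        · exact h
        · obtain ⟨heq, -⟩ := suffix_concat h
          simp at heq
      -- n < Kp w : the suffix of w of length n occurs at least twice in w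
      have hK : n < Kp w := by
        by_contra hcon
        push_neg at hcon
        have hocc1 : occ (w.drop (w.length - n)) w = 1 := occ_drop_eq_one hcon hnN
        obtain ⟨i, hi⟩ := infix_iff_occFin.1 hother
        have hi2 : i ∈ occFin v w := mem_occFin_of_prefix (List.prefix_append _ _) hi
        have hi3 : i + (n + 1) ≤ w.length := by
          have := (mem_occFin.1 hi).1
          have hlv : (v ++ [!c]).length = n + 1 := by
            rw [List.length_append, ← hlen, hn]; simp
          omega
        have hsufmem := suffix_mem_occFin (w := w) hnN
        have hveq' : v = w.drop (w.length - n) := by rw [hveq, ← hlen]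
        rw [← hveq'] at hsufmem
        have hne2 : i ≠ w.length - n := by omega
        have h2 : 2 ≤ occ v w := by
          rw [occ_eq_card]
          exact Finset.one_lt_card.2 ⟨i, hi2, _, hsufmem, hne2⟩
        rw [hveq'] at h2
        omega
      -- counting
      have hflow : (n + 1) + 1 ≤ (facFin w (n + 1)).card := f_lower (by omega) (by omega)
      have hfresh_mem : (v ++ [c]) ∈ facFin (w ++ [c]) (n + 1) := by
        rw [mem_facFin]
        constructor
        · rw [List.length_append, ← hlen, hn]; simp
        · exact hvsuf.isInfix
      have hsub : insert (v ++ [c]) (facFin w (n + 1)) ⊆ facFin (w ++ [c]) (n + 1) := by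
        intro x hx
        rcases Finset.mem_insert.1 hx with rfl | hx
        · exact hfresh_mem
        · rw [mem_facFin] at hx ⊢
          exact ⟨hx.1, hx.2.trans (List.prefix_append w [c]).isInfix⟩
      have hnotmem : (v ++ [c]) ∉ facFin w (n + 1) := by
        rw [mem_facFin]
        rintro ⟨-, hinf⟩
        exact hvfresh hinf
      have hcard : (n + 1) + 2 ≤ (facFin (w ++ [c]) (n + 1)).card := by
        have h1 : (insert (v ++ [c]) (facFin w (n + 1))).card = (facFin w (n + 1)).card + 1 :=
          Finset.card_insert_of_notMem hnotmem
        have h2 := Finset.card_le_card hsub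
        omega
      have := trap_card htrap (n + 1)
      omega
    by_cases hu' : RightSpecial w u <;> by_cases hv' : RightSpecial w v
    · exact hne (ih htrap' u v hlen hu' hv')
    · exact aux u v hlen hv hne hu' hv'
    · exact aux v u hlen.symm hu (Ne.symm hne) hv' hu'
    · obtain ⟨hueq, -, -⟩ := new_rs hu hu'
      obtain ⟨hveq, -, -⟩ := new_rs hv hv'
      rw [hueq, hveq, hlen] at hne
      exact hne rfl

lemma RSFin_card_le_one {w : Word} (htrap : Trapezoidal w) (n : ℕ) :
    (RSFin w n).card ≤ 1 := by
  rw [Finset.card_le_one]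
  intro a ha b hb
  rw [mem_RSFin] at ha hb
  exact rs_unique w htrap a b (ha.1.trans hb.1.symm) ha.2 hb.2

lemma facFin_top_empty (w : Word) : facFin w (w.length + 1) = ∅ := by
  apply facFin_empty_of_lt
  omega

/-- d'Alessandro's identity for trapezoidal words. -/
theorem length_eq_Rp_add_Kp {w : Word} (htrap : Trapezoidal w) :
    w.length = Rp w + Kp w := by
  have ht := telescope w (w.length + 1)
  rw [facFin_top_empty, Finset.card_empty] at ht
  have hNE := sum_NEFin w (le_refl (w.length + 1))
  have hRS : ∑ n ∈ Finset.range (w.length + 1), (RSFin w n).card = Rp w := by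
    have hstep : ∀ n ∈ Finset.range (w.length + 1),
        (RSFin w n).card = if n < Rp w then 1 else 0 := by
      intro n hn
      split_ifs with h
      · have h1 := RSFin_card_le_one htrap n
        have h2 : 0 < (RSFin w n).card := by
          rw [Finset.card_pos]
          obtain ⟨u, hu1, hu2⟩ := exists_rs_of_lt (w := w) (n := n) h
          exact ⟨u, mem_RSFin.2 ⟨hu1, hu2⟩⟩
        omega
      · rw [Finset.card_eq_zero, Finset.eq_empty_iff_forall_notMem]
        intro u hu
        rw [mem_RSFin] at hu
        have := rs_length_lt hu.2
        omega
    rw [Finset.sum_congr rfl hstep, ← Finset.card_filter]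
    have heq : (Finset.range (w.length + 1)).filter (fun n => n < Rp w) = Finset.range (Rp w) := by
      ext n
      simp only [Finset.mem_filter, Finset.mem_range]
      have := Rp_le_length w
      omega
    rw [heq, Finset.card_range]
  rw [hNE, hRS] at ht
  have := Kp_le_length w
  omega

end OCP

namespace OCP

lemma fac_reverse {w : Word} {j n : ℕ} (h : j + n ≤ w.length) :
    fac w.reverse j n = (fac w (w.length - j - n) n).reverse := by
  rw [fac, fac, List.reverse_take, List.reverse_drop]
  have e2 : (w.drop (w.length - j - n)).length = j + n := by rw [List.length_drop]; omega
  have e1 : w.length - (w.length - j - n) = j + n := by omega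
  rw [e1, e2]
  have e3 : j + n - n = j := by omega
  rw [e3, List.drop_take]
  congr 1
  omega

lemma mem_occFin_reverse {u w : Word} {i : ℕ} (h : i ∈ occFin u w) :
    w.length - u.length - i ∈ occFin u.reverse w.reverse := by
  rw [mem_occFin] at h ⊢
  obtain ⟨h1, h2⟩ := h
  rw [List.length_reverse, List.length_reverse]
  refine ⟨by omega, ?_⟩
  rw [fac_reverse (by omega)]
  have : w.length - (w.length - u.length - i) - u.length = i := by omega
  rw [this, h2]

lemma occ_reverse (u w : Word) : occ u.reverse w.reverse = occ u w := by
  rw [occ_eq_card, occ_eq_card]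
  apply (Finset.card_nbij' (fun i => w.length - u.length - i) (fun i => w.length - u.length - i)
    ?_ ?_ ?_ ?_).symm
  · intro i hi
    exact mem_occFin_reverse hi
  · intro i hi
    have := mem_occFin_reverse hi
    rw [List.length_reverse, List.length_reverse, List.reverse_reverse, List.reverse_reverse]
      at this
    exact this
  · intro i hi
    have := (mem_occFin.1 hi).1
    simp only
    omega
  · intro i hi
    have := (mem_occFin.1 hi).1
    rw [List.length_reverse, List.length_reverse] at this
    simp only
    omega

lemma Kp_reverse (w : Word) : Kp (w.reverse) = Hp w := by
  rw [Kp, Hp]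
  congr 1
  ext n
  simp only [Set.mem_setOf_eq, List.length_reverse]
  constructor
  · rintro ⟨h1, h2⟩
    refine ⟨h1, ?_⟩
    rw [← h2, ← occ_reverse (w.take n) w, List.reverse_take]
  · rintro ⟨h1, h2⟩
    refine ⟨h1, ?_⟩
    rw [← occ_reverse (w.take n) w, List.reverse_take] at h2
    exact h2

lemma Hp_reverse (w : Word) : Hp (w.reverse) = Kp w := by
  have := Kp_reverse (w.reverse)
  rw [List.reverse_reverse] at this
  omega

lemma rightSpecial_reverse {w u : Word} :
    RightSpecial w.reverse u ↔ LeftSpecial w u.reverse := by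
  rw [RightSpecial, LeftSpecial]
  have h1 : ∀ c : Bool, ((u ++ [c]) <:+: w.reverse ↔ (c :: u.reverse) <:+: w) := by
    intro c
    rw [← List.reverse_infix, List.reverse_append]
    simp
  rw [h1, h1]

lemma Rp_reverse (w : Word) : Rp (w.reverse) = Lp w := by
  rw [Rp, Lp]
  congr 1
  ext n
  simp only [Set.mem_setOf_eq]
  constructor
  · intro h v hv hLS
    apply h v.reverse (by simpa using hv)
    rw [rightSpecial_reverse, List.reverse_reverse]
    exact hLS
  · intro h v hv hRS
    apply h v.reverse (by simpa using hv)
    rw [rightSpecial_reverse] at hRS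
    exact hRS

lemma Lp_reverse (w : Word) : Lp (w.reverse) = Rp w := by
  have := Rp_reverse (w.reverse)
  rw [List.reverse_reverse] at this
  omega

lemma trapezoidal_reverse {w : Word} (h : Trapezoidal w) : Trapezoidal w.reverse := by
  intro n
  have himg : factorSet w.reverse n = (fun u : Word => u.reverse) '' factorSet w n := by
    ext u
    simp only [factorSet, Set.mem_setOf_eq, Set.mem_image]
    constructor
    · rintro ⟨h1, h2⟩
      refine ⟨u.reverse, ⟨by simpa using h1, ?_⟩, List.reverse_reverse u⟩
      have h3 : u.reverse <:+: w.reverse.reverse := List.reverse_infix.2 h2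
      rwa [List.reverse_reverse] at h3
    · rintro ⟨v, ⟨h1, h2⟩, rfl⟩
      exact ⟨by simpa using h1, List.reverse_infix.2 h2⟩
  rw [himg, Set.ncard_image_of_injective _ (fun a b hab => by simpa using congrArg List.reverse hab)]
  exact h n

lemma closedWord_reverse {w : Word} (h : ClosedWord w) : ClosedWord w.reverse := by
  rcases h with rfl | ⟨u, hne, hpre, hsuf, hocc⟩
  · left; rfl
  · right
    refine ⟨u.reverse, ?_, ?_, ?_, ?_⟩
    · intro hc
      exact hne (by simpa using congrArg List.reverse hc)
    · rw [List.reverse_prefix]; exact hsuf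
    · rw [List.reverse_suffix]; exact hpre
    · rw [occ_reverse]; exact hocc

end OCP

namespace OCP

variable {w : Word}

lemma occ_two_of_mem {u : Word} {i j : ℕ} (hi : i ∈ occFin u w) (hj : j ∈ occFin u w)
    (hij : i ≠ j) : 2 ≤ occ u w := by
  rw [occ_eq_card]
  exact Finset.one_lt_card.2 ⟨i, hi, j, hj, hij⟩

/-- A repeated factor is shorter than `max H L`. -/
lemma repeated_aux :
    ∀ (i : ℕ) {u : Word} {j : ℕ}, i < j → i ∈ occFin u w → j ∈ occFin u w →
      u.length < max (Hp w) (Lp w) := by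
  intro i
  induction i with
  | zero =>
    intro u j hij hi hj
    have hi' := mem_occFin.1 hi
    have hj' := mem_occFin.1 hj
    have hu : u = w.take u.length := by
      conv_lhs => rw [← hi'.2]
      rw [fac_zero]
    have h2 : 2 ≤ occ (w.take u.length) w := by
      rw [← hu]
      exact occ_two_of_mem hi hj (by omega)
    have hH : u.length < Hp w := by
      by_contra hcon
      push_neg at hcon
      have := occ_take_eq_one hcon (by omega)
      omega
    omega
  | succ i ih =>
    intro u j hij hi hj
    have hi' := mem_occFin.1 hi
    have hj' := mem_occFin.1 hj
    have hiN : i < w.length := by omega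
    have hjN : j - 1 < w.length := by omega
    have hje : j - 1 + 1 = j := by omega
    have hfi : fac w i (u.length + 1) = w[i] :: u := by
      rw [fac_cons u.length hiN, hi'.2]
    have hfj : fac w (j - 1) (u.length + 1) = w[j - 1] :: u := by
      rw [fac_cons u.length hjN, hje, hj'.2]
    have hmi : i ∈ occFin (w[i] :: u) w := by
      rw [mem_occFin, List.length_cons]
      exact ⟨by omega, hfi⟩
    have hmj : j - 1 ∈ occFin (w[j - 1] :: u) w := by
      rw [mem_occFin, List.length_cons]
      exact ⟨by omega, hfj⟩
    by_cases hc : w[i] = w[j - 1]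
    · have hmj' : j - 1 ∈ occFin (w[i] :: u) w := by rw [hc]; exact hmj
      have := ih (u := w[i] :: u) (j := j - 1) (by omega) hmi hmj'
      rw [List.length_cons] at this
      omega
    · have hls : LeftSpecial w u := by
        have h1 : (w[i] :: u) <:+: w := hfi ▸ fac_infix w i (u.length + 1)
        have h2 : (w[j-1] :: u) <:+: w := hfj ▸ fac_infix w (j-1) (u.length + 1)
        cases hb : w[i] <;> cases hb' : w[j-1] <;> rw [hb] at h1 <;> rw [hb'] at h2 <;>
          first
          | exact absurd (hb.trans hb'.symm) hc
          | exact ⟨h1, h2⟩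
          | exact ⟨h2, h1⟩
      have := ls_length_lt hls
      omega

lemma repeated_lt_HL {u : Word} (h : 2 ≤ occ u w) : u.length < max (Hp w) (Lp w) := by
  rw [occ_eq_card] at h
  obtain ⟨a, ha, b, hb, hab⟩ := Finset.one_lt_card.1 h
  rcases lt_or_gt_of_ne hab with hlt | hlt
  · exact repeated_aux a hlt ha hb
  · exact repeated_aux b hlt hb ha

lemma repeated_lt_KR {u : Word} (h : 2 ≤ occ u w) : u.length < max (Kp w) (Rp w) := by
  have h' : 2 ≤ occ u.reverse w.reverse := by rw [occ_reverse]; exact h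
  have := repeated_lt_HL h'
  rw [List.length_reverse, Hp_reverse, Lp_reverse] at this
  omega

/-! ### closed words -/

lemma occ_nil_eq (w : Word) : occ [] w = w.length + 1 := by
  rw [occ_eq_card]
  have : occFin [] w = Finset.range (w.length + 1) := by
    ext i
    rw [mem_occFin, Finset.mem_range]
    simp [fac]
  rw [this, Finset.card_range]

lemma Hp_pos (hw : w ≠ []) : 1 ≤ Hp w := by
  by_contra hcon
  push_neg at hcon
  have h0 : Hp w = 0 := by omega
  have hmem := (Hp_spec w).2
  rw [h0, List.take_zero, occ_nil_eq] at hmem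
  have : w.length = 0 := by omega
  exact hw (List.eq_nil_of_length_eq_zero this)

lemma Kp_pos (hw : w ≠ []) : 1 ≤ Kp w := by
  by_contra hcon
  push_neg at hcon
  have h0 : Kp w = 0 := by omega
  have hmem := (Kp_spec w).2
  rw [h0] at hmem
  rw [Nat.sub_zero, List.drop_length, occ_nil_eq] at hmem
  have : w.length = 0 := by omega
  exact hw (List.eq_nil_of_length_eq_zero this)

lemma prefix_eq_take {u : Word} (h : u <+: w) : u = w.take u.length := by
  obtain ⟨t, rfl⟩ := h
  rw [List.take_left]

lemma closed_Hp {u : Word} (hocc : occ u w = 2) (hpre : u <+: w) (hsuf : u <:+ w)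
    (hne : u ≠ w) : Hp w = u.length + 1 := by
  set n := u.length with hn
  have hnN : n < w.length := by
    have h1 : n ≤ w.length := hpre.length_le
    rcases eq_or_lt_of_le h1 with h2 | h2
    · exact absurd (hpre.eq_of_length h2) hne
    · exact h2
  have h0 : 0 ∈ occFin u w := by
    rw [mem_occFin]
    refine ⟨by omega, ?_⟩
    rw [← hn]
    have := prefix_eq_take hpre
    rw [fac_zero, ← this]
  have hNn : w.length - n ∈ occFin u w := by
    rw [mem_occFin]
    refine ⟨by omega, ?_⟩
    rw [← hn, fac_suffix_eq (by omega)]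
    exact (suffix_eq_drop hsuf).symm
  have hne0 : w.length - n ≠ 0 := by omega
  have hpair : ({0, w.length - n} : Finset ℕ) = occFin u w := by
    apply Finset.eq_of_subset_of_card_le
    · intro x hx
      rcases Finset.mem_insert.1 hx with rfl | hx
      · exact h0
      · rw [Finset.mem_singleton] at hx; subst hx; exact hNn
    · rw [← occ_eq_card, hocc, Finset.card_insert_of_notMem (by simp [Ne.symm hne0]),
        Finset.card_singleton]
  -- occ of the prefix of length n+1 is 1
  have hocc1 : occ (w.take (n + 1)) w = 1 := by
    rw [occ_eq_card]
    have hsingle : occFin (w.take (n + 1)) w = {0} := by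
      apply Finset.Subset.antisymm
      · intro i hi
        have hlen : (w.take (n + 1)).length = n + 1 := by
          rw [List.length_take]; omega
        have hi2 : i ∈ occFin u w := by
          have hp : u <+: w.take (n + 1) := by
            rw [prefix_eq_take hpre, ← hn]
            have : w.take n = (w.take (n + 1)).take n := by
              rw [List.take_take]; congr 1; omega
            rw [this]
            exact List.take_prefix _ _
          exact mem_occFin_of_prefix hp hi
        rw [← hpair] at hi2
        have hi3 := (mem_occFin.1 hi).1
        rw [hlen] at hi3
        rcases Finset.mem_insert.1 hi2 with rfl | hi2
        · exact Finset.mem_singleton_self 0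
        · rw [Finset.mem_singleton] at hi2
          omega
      · intro i hi
        rw [Finset.mem_singleton] at hi
        subst hi
        exact zero_mem_occFin_take (by omega)
    rw [hsingle, Finset.card_singleton]
  have hle : Hp w ≤ n + 1 := Nat.sInf_le ⟨by omega, hocc1⟩
  have hgt : n < Hp w := by
    by_contra hcon
    push_neg at hcon
    have h1 := occ_take_eq_one hcon (by omega)
    rw [← prefix_eq_take hpre] at h1
    omega
  omega

lemma closed_Hp_eq_Kp (hcl : ClosedWord w) : Hp w = Kp w := by
  rcases hcl with rfl | ⟨u, hne, hpre, hsuf, hocc⟩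
  · have hH : Hp ([] : Word) ≤ 0 :=
      Nat.sInf_le ⟨le_refl 0, by rw [List.take_nil]; exact occ_self []⟩
    have hK : Kp ([] : Word) ≤ 0 :=
      Nat.sInf_le ⟨le_refl 0, by rw [List.drop_nil]; exact occ_self []⟩
    omega
  · have h1 : Hp w = u.length + 1 := closed_Hp hocc hpre hsuf hne
    have h2 : Hp w.reverse = u.reverse.length + 1 := by
      apply closed_Hp
      · rw [occ_reverse]; exact hocc
      · rw [List.reverse_prefix]; exact hsuf
      · rw [List.reverse_suffix]; exact hpre
      · intro hc
        exact hne (by simpa using congrArg List.reverse hc)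
    rw [Hp_reverse, List.length_reverse] at h2
    omega

/-! ### the dichotomy for open words -/

lemma notClosed_rs (hcl : ¬ ClosedWord w) : RightSpecial w (w.take (Hp w - 1)) := by
  have hw : w ≠ [] := fun h => hcl (Or.inl h)
  have hH1 : 1 ≤ Hp w := Hp_pos hw
  have hHN : Hp w ≤ w.length := Hp_le_length w
  set n' := Hp w - 1 with hn'
  set p' := w.take n' with hp'
  have hlenp : p'.length = n' := by rw [hp', List.length_take]; omega
  have h2 : 2 ≤ occ p' w := occ_take_ge_two (by omega) (by omega)
  have hocc1 : occ (w.take (Hp w)) w = 1 := (Hp_spec w).2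
  have h0 : 0 ∈ occFin p' w := by rw [hp']; exact zero_mem_occFin_take (by omega)
  by_cases hex : ∃ π ∈ occFin p' w, π ≠ 0 ∧ π + n' ≠ w.length
  · obtain ⟨π, hπ, hπ0, hπN⟩ := hex
    have hπ' := mem_occFin.1 hπ
    rw [hlenp] at hπ'
    have hπlt : π + n' < w.length := by omega
    have hext : fac w π (n' + 1) = p' ++ [w[π + n']] := by
      rw [fac_succ hπlt, hπ'.2]
    have hocc1' : occ (w.take (n' + 1)) w = 1 := by
      rw [show n' + 1 = Hp w by omega]
      exact hocc1
    have hpref : w.take (n' + 1) = p' ++ [w[n']] := by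
      have h01 : fac w 0 (n' + 1) = fac w 0 n' ++ [w[0 + n']] := fac_succ (by omega)
      simp only [Nat.zero_add] at h01
      rw [fac_zero, fac_zero] at h01
      rw [h01]
    by_cases hcc : w[π + n'] = w[n']
    · exfalso
      have hmem : π ∈ occFin (w.take (n' + 1)) w := by
        rw [mem_occFin]
        have hlen2 : (w.take (n' + 1)).length = n' + 1 := by rw [List.length_take]; omega
        rw [hlen2]
        exact ⟨by omega, by rw [hext, hcc, ← hpref]⟩
      have h0' : 0 ∈ occFin (w.take (n' + 1)) w := zero_mem_occFin_take (by omega)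
      have := occ_two_of_mem hmem h0' hπ0
      omega
    · have hinf1 : (p' ++ [w[n']]) <:+: w := hpref ▸ (w.take_prefix (n' + 1)).isInfix
      have hinf2 : (p' ++ [w[π + n']]) <:+: w := hext ▸ fac_infix w π (n' + 1)
      show RightSpecial w p'
      cases hb : w[n'] <;> cases hb' : w[π + n'] <;> rw [hb] at hinf1 <;> rw [hb'] at hinf2 <;>
        first
        | exact absurd (hb'.trans hb.symm) hcc
        | exact ⟨hinf1, hinf2⟩
        | exact ⟨hinf2, hinf1⟩
  · exfalso
    push_neg at hex
    -- every occurrence is 0 or the suffix position, so w is closed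
    obtain ⟨a, ha, b, hb, hab⟩ := Finset.one_lt_card.1 (by rw [← occ_eq_card]; omega :
      1 < (occFin p' w).card)
    have key : ∀ x ∈ occFin p' w, x ≠ 0 → x = w.length - n' ∧ w.length - n' ≠ 0 := by
      intro x hx hx0
      have hxN := hex x hx hx0
      have hxl := (mem_occFin.1 hx).1
      constructor <;> omega
    have hNmem : w.length - n' ∈ occFin p' w ∧ w.length - n' ≠ 0 := by
      by_cases ha0 : a = 0
      · have hb0 : b ≠ 0 := fun hc => hab (ha0.trans hc.symm)
        obtain ⟨he, hne2⟩ := key b hb hb0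
        exact ⟨he ▸ hb, hne2⟩
      · obtain ⟨he, hne2⟩ := key a ha ha0
        exact ⟨he ▸ ha, hne2⟩
    have hNn0 : w.length - n' ≠ 0 := hNmem.2
    have hpair : occFin p' w = {0, w.length - n'} := by
      apply Finset.Subset.antisymm
      · intro x hx
        by_cases hx0 : x = 0
        · subst hx0; exact Finset.mem_insert_self _ _
        · obtain ⟨he, -⟩ := key x hx hx0
          rw [he]
          exact Finset.mem_insert_of_mem (Finset.mem_singleton_self _)
      · intro x hx
        rcases Finset.mem_insert.1 hx with rfl | hx
        · exact h0
        · rw [Finset.mem_singleton] at hx; subst hx; exact hNmem.1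
    have hocc2 : occ p' w = 2 := by
      rw [occ_eq_card, hpair, Finset.card_insert_of_notMem (by simp [Ne.symm hNn0]),
        Finset.card_singleton]
    apply hcl
    right
    refine ⟨p', ?_, w.take_prefix n', ?_, hocc2⟩
    · intro hc
      have := congrArg List.length hc
      rw [hlenp] at this
      omega
    · have := (mem_occFin.1 hNmem.1).2
      rw [hlenp, fac_suffix_eq (by omega)] at this
      rw [← this]
      exact w.drop_suffix _
end OCP

namespace OCP

variable {w : Word}

lemma notClosed_ls (hcl : ¬ ClosedWord w) :
    LeftSpecial w (w.drop (w.length - (Kp w - 1))) := by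
  have hcl' : ¬ ClosedWord w.reverse := by
    intro hc
    have := closedWord_reverse hc
    rw [List.reverse_reverse] at this
    exact hcl this
  have hrs := notClosed_rs hcl'
  rw [Hp_reverse] at hrs
  rw [rightSpecial_reverse] at hrs
  rwa [List.reverse_take, List.reverse_reverse, List.length_reverse] at hrs

lemma notClosed_Hp_le_Rp (hcl : ¬ ClosedWord w) : Hp w ≤ Rp w := by
  have hw : w ≠ [] := fun h => hcl (Or.inl h)
  have h1 := Hp_pos hw
  have h2 := Hp_le_length w
  have hrs := notClosed_rs hcl
  have := rs_length_lt hrs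
  rw [List.length_take] at this
  omega

lemma rs_suffix_chain (htrap : Trapezoidal w) :
    ∀ (k : ℕ) (x y : Word), RightSpecial w x → RightSpecial w y → x.length + k = y.length →
      x = y.drop k := by
  intro k
  induction k with
  | zero =>
    intro x y hx hy hlen
    rw [List.drop_zero]
    exact rs_unique w htrap x y (by omega) hx hy
  | succ k ih =>
    intro x y hx hy hlen
    have hyne : y ≠ [] := by
      intro h
      rw [h] at hlen
      simp at hlen
    have hy' : RightSpecial w y.tail := rs_tail hy hyne
    have h1 := ih x y.tail hx hy' (by rw [List.length_tail]; omega)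
    rw [h1, ← List.drop_one, List.drop_drop]
    congr 1
    omega

lemma rs_eq_drop (htrap : Trapezoidal w) {x y : Word} (hx : RightSpecial w x)
    (hy : RightSpecial w y) (hle : x.length ≤ y.length) :
    x = y.drop (y.length - x.length) :=
  rs_suffix_chain htrap (y.length - x.length) x y hx hy (by omega)

lemma leftSpecial_iff_reverse {u : Word} : LeftSpecial w u ↔ RightSpecial w.reverse u.reverse := by
  rw [rightSpecial_reverse, List.reverse_reverse]

lemma ls_eq_take (htrap : Trapezoidal w) {x y : Word} (hx : LeftSpecial w x)
    (hy : LeftSpecial w y) (hle : x.length ≤ y.length) :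
    x = y.take x.length := by
  have htrap' := trapezoidal_reverse htrap
  have h1 := rs_eq_drop htrap' (leftSpecial_iff_reverse.1 hx) (leftSpecial_iff_reverse.1 hy)
    (by simpa using hle)
  have h2 := congrArg List.reverse h1
  rw [List.reverse_reverse, List.reverse_drop, List.reverse_reverse] at h2
  have h3 : y.length - (y.length - x.length) = x.length := by omega
  rw [List.length_reverse, List.length_reverse, h3] at h2
  exact h2

lemma length_eq_Lp_add_Hp (htrap : Trapezoidal w) : w.length = Lp w + Hp w := by
  have := length_eq_Rp_add_Kp (trapezoidal_reverse htrap)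
  rwa [List.length_reverse, Rp_reverse, Kp_reverse] at this

/-! ### the excess counting lemma -/

lemma occFin_eq_fiber {u : Word} {m : ℕ} (hm : m ≤ w.length) (hu : u.length = m) :
    occFin u w = (Finset.range (w.length - m + 1)).filter (fun i => fac w i m = u) := by
  ext i
  rw [mem_occFin, Finset.mem_filter, Finset.mem_range, hu]
  constructor
  · rintro ⟨h1, h2⟩; exact ⟨by omega, h2⟩
  · rintro ⟨h1, h2⟩; exact ⟨by omega, h2⟩

lemma occ_sum {m : ℕ} (hm : m ≤ w.length) :
    ∑ u ∈ facFin w m, (occFin u w).card = w.length - m + 1 := by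
  have hclass : ∀ i ∈ Finset.range (w.length - m + 1), fac w i m ∈ facFin w m := by
    intro i hi
    rw [Finset.mem_range] at hi
    exact mem_facFin.2 ⟨fac_length (by omega), fac_infix w i m⟩
  have h := Finset.card_eq_sum_card_fiberwise hclass
  rw [Finset.card_range] at h
  rw [h]
  apply Finset.sum_congr rfl
  intro u hu
  rw [occFin_eq_fiber hm (mem_facFin.1 hu).1]

lemma excess {m : ℕ} (hm : m ≤ w.length) (P : Finset ℕ)
    (hP : ∀ p ∈ P, p + m ≤ w.length) :
    (facFin w m).card + P.card
      ≤ (w.length - m + 1) + (P.image (fun p => fac w p m)).card := by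
  classical
  set W := P.image (fun p => fac w p m) with hW
  have hWsub : W ⊆ facFin w m := by
    intro u hu
    obtain ⟨p, hp, rfl⟩ := Finset.mem_image.1 hu
    exact mem_facFin.2 ⟨fac_length (hP p hp), fac_infix w p m⟩
  have hfib : P.card = ∑ u ∈ W, (P.filter (fun p => fac w p m = u)).card :=
    Finset.card_eq_sum_card_fiberwise (fun p hp => Finset.mem_image_of_mem _ hp)
  have hsum1 : ∑ u ∈ W, (P.filter (fun p => fac w p m = u)).card
      ≤ ∑ u ∈ W, (occFin u w).card := by
    apply Finset.sum_le_sum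
    intro u hu
    apply Finset.card_le_card
    intro p hp
    rw [Finset.mem_filter] at hp
    rw [mem_occFin]
    obtain ⟨hu1, -⟩ := mem_facFin.1 (hWsub hu)
    rw [hu1]
    exact ⟨hP p hp.1, hp.2⟩
  have hsum2 : (facFin w m \ W).card ≤ ∑ u ∈ facFin w m \ W, (occFin u w).card := by
    calc (facFin w m \ W).card = ∑ _u ∈ facFin w m \ W, 1 := by
          rw [Finset.sum_const, smul_eq_mul, mul_one]
    _ ≤ _ := by
        apply Finset.sum_le_sum
        intro u hu
        rw [Nat.one_le_iff_ne_zero, ← Nat.pos_iff_ne_zero, Finset.card_pos]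
        exact infix_iff_occFin.1 (mem_facFin.1 (Finset.mem_sdiff.1 hu).1).2
  have hsplit : ∑ u ∈ facFin w m \ W, (occFin u w).card + ∑ u ∈ W, (occFin u w).card
      = ∑ u ∈ facFin w m, (occFin u w).card := Finset.sum_sdiff hWsub
  have hcards : (facFin w m \ W).card = (facFin w m).card - W.card := Finset.card_sdiff_of_subset hWsub
  have hWle : W.card ≤ (facFin w m).card := Finset.card_le_card hWsub
  have htotal := occ_sum (w := w) hm
  omega

end OCP

namespace OCP

lemma open_Hp_eq_Rp {w : Word} (htrap : Trapezoidal w) (hop : ¬ ClosedWord w) :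
    Hp w = Rp w := by
  have hw : w ≠ [] := fun h => hop (Or.inl h)
  have hHR : Hp w ≤ Rp w := notClosed_Hp_le_Rp hop
  by_contra hne
  have hHRlt : Hp w < Rp w := by omega
  have hH1 : 1 ≤ Hp w := Hp_pos hw
  have hK1 : 1 ≤ Kp w := Kp_pos hw
  have hHN : Hp w ≤ w.length := Hp_le_length w
  have hKN : Kp w ≤ w.length := Kp_le_length w
  have hRN : Rp w ≤ w.length := Rp_le_length w
  have hLN : Lp w ≤ w.length := Lp_le_length w
  have hNRK : w.length = Rp w + Kp w := length_eq_Rp_add_Kp htrap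
  have hNLH : w.length = Lp w + Hp w := length_eq_Lp_add_Hp htrap
  -- the right special factor of maximal length
  obtain ⟨v, hvlen, hvRS⟩ := exists_rs_of_lt (w := w) (n := Rp w - 1) (by omega)
  have hvocc : 2 ≤ occ v w := rs_occ_two hvRS
  -- R ≤ L
  have hRL : Rp w ≤ Lp w := by
    have h := repeated_lt_HL hvocc
    rw [hvlen] at h
    rcases le_total (Hp w) (Lp w) with hc | hc
    · rw [max_eq_right hc] at h; omega
    · rw [max_eq_left hc] at h; omega
  -- the left special factor of maximal length
  obtain ⟨lam, hllen, hlLS⟩ := exists_ls_of_lt (w := w) (n := Lp w - 1) (by omega)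
  have hLR : Lp w ≤ Rp w := by
    have h := repeated_lt_KR (ls_occ_two hlLS)
    rw [hllen] at h
    rcases le_total (Kp w) (Rp w) with hc | hc
    · rw [max_eq_right hc] at h; omega
    · rw [max_eq_left hc] at h; omega
  have hRLeq : Rp w = Lp w := le_antisymm hRL hLR
  have hHK : Hp w = Kp w := by omega
  have hKR : Kp w + 1 ≤ Rp w := by omega
  -- counting at length R - 1 : lam = v and v occurs exactly twice
  have hfl : Kp w + 1 ≤ (facFin w (Rp w - 1)).card := f_lower_mid (by omega) (by omega) (by omega)
  have hsum := occ_sum (w := w) (m := Rp w - 1) (by omega)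
  have hNval : w.length - (Rp w - 1) + 1 = Kp w + 2 := by omega
  have hvmem : v ∈ facFin w (Rp w - 1) := mem_facFin.2 ⟨hvlen, rs_infix hvRS⟩
  have hlamlen' : lam.length = Rp w - 1 := by rw [hllen]; omega
  have hlmem : lam ∈ facFin w (Rp w - 1) := mem_facFin.2 ⟨hlamlen', ls_infix hlLS⟩
  have herase_ge : ∀ (s : Finset Word), s ⊆ facFin w (Rp w - 1) →
      s.card ≤ ∑ u ∈ s, (occFin u w).card := by
    intro s hs
    calc s.card = ∑ _u ∈ s, 1 := by rw [Finset.sum_const, smul_eq_mul, mul_one]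
    _ ≤ _ := Finset.sum_le_sum (fun u hu => by
        rw [Nat.one_le_iff_ne_zero, ← Nat.pos_iff_ne_zero, Finset.card_pos]
        exact infix_iff_occFin.1 (mem_facFin.1 (hs hu)).2)
  have hv2 : 2 ≤ (occFin v w).card := by rw [← occ_eq_card]; exact hvocc
  have hlamv : lam = v := by
    by_contra hne2
    have hlmem2 : lam ∈ (facFin w (Rp w - 1)).erase v := Finset.mem_erase.2 ⟨hne2, hlmem⟩
    have h1 := Finset.add_sum_erase (facFin w (Rp w - 1)) (fun u => (occFin u w).card) hvmem
    have h2 := Finset.add_sum_erase ((facFin w (Rp w - 1)).erase v)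
      (fun u => (occFin u w).card) hlmem2
    have h3 := herase_ge (((facFin w (Rp w - 1)).erase v).erase lam)
      (fun u hu => Finset.erase_subset _ _ (Finset.erase_subset _ _ hu))
    have hc1 : ((facFin w (Rp w - 1)).erase v).card = (facFin w (Rp w - 1)).card - 1 :=
      Finset.card_erase_of_mem hvmem
    have hc2 : (((facFin w (Rp w - 1)).erase v).erase lam).card
        = ((facFin w (Rp w - 1)).erase v).card - 1 := Finset.card_erase_of_mem hlmem2
    have hl2 : 2 ≤ (occFin lam w).card := by rw [← occ_eq_card]; exact ls_occ_two hlLS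
    omega
  have hvLS : LeftSpecial w v := by rw [← hlamv]; exact hlLS
  have hvocc2 : (occFin v w).card = 2 := by
    have h1 := Finset.add_sum_erase (facFin w (Rp w - 1)) (fun u => (occFin u w).card) hvmem
    have h3 := herase_ge ((facFin w (Rp w - 1)).erase v) (fun u hu => Finset.erase_subset _ _ hu)
    have hc1 : ((facFin w (Rp w - 1)).erase v).card = (facFin w (Rp w - 1)).card - 1 :=
      Finset.card_erase_of_mem hvmem
    omega
  -- the prefix and suffix special factors
  have hp'RS : RightSpecial w (w.take (Kp w - 1)) := by
    have := notClosed_rs hop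
    rwa [hHK] at this
  have hs'LS : LeftSpecial w (w.drop (w.length - (Kp w - 1))) := notClosed_ls hop
  have hp'len : (w.take (Kp w - 1)).length = Kp w - 1 := by rw [List.length_take]; omega
  have hs'len : (w.drop (w.length - (Kp w - 1))).length = Kp w - 1 := by
    rw [List.length_drop]; omega
  have hp'drop : w.take (Kp w - 1) = v.drop (Rp w - Kp w) := by
    have h := rs_eq_drop htrap hp'RS hvRS (by rw [hp'len, hvlen]; omega)
    rw [hvlen, hp'len] at h
    rw [h]
    congr 1
    omega
  have hs'take : w.drop (w.length - (Kp w - 1)) = v.take (Kp w - 1) := by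
    have h := ls_eq_take htrap hs'LS hvLS (by rw [hs'len, hvlen]; omega)
    rw [hs'len] at h
    exact h
  -- the two occurrences of v
  have main : ∀ i j : ℕ, i < j → occFin v w = {i, j} → False := by
    intro i j hij hpair
    have hiv : i ∈ occFin v w := by rw [hpair]; exact Finset.mem_insert_self _ _
    have hjv : j ∈ occFin v w := by
      rw [hpair]; exact Finset.mem_insert_of_mem (Finset.mem_singleton_self _)
    have hvi : fac w i (Rp w - 1) = v := by
      have := (mem_occFin.1 hiv).2
      rwa [hvlen] at this
    have hvj : fac w j (Rp w - 1) = v := by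
      have := (mem_occFin.1 hjv).2
      rwa [hvlen] at this
    -- i ≥ 1 (v is left special, both occurrences are preceded by a letter)
    have hi1 : 1 ≤ i := by
      obtain ⟨af, haf⟩ := infix_iff_occFin.1 hvLS.1
      obtain ⟨at', hat⟩ := infix_iff_occFin.1 hvLS.2
      have hafv : af + 1 ∈ occFin v w := by
        have h' := mem_occFin_of_suffix (List.suffix_cons false v) haf
        rwa [show (false :: v).length - v.length = 1 from by simp] at h'
      have hatv : at' + 1 ∈ occFin v w := by
        have h' := mem_occFin_of_suffix (List.suffix_cons true v) hat
        rwa [show (true :: v).length - v.length = 1 from by simp] at h'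
      have hafat : af + 1 ≠ at' + 1 := by
        intro hc
        have h1 := (mem_occFin.1 haf).2
        have h2 := (mem_occFin.1 hat).2
        rw [show af = at' from by omega] at h1
        rw [show (false :: v).length = (true :: v).length from by simp] at h1
        rw [h1] at h2
        simp at h2
      have hsub : ({af + 1, at' + 1} : Finset ℕ) ⊆ occFin v w := by
        intro x hx
        rcases Finset.mem_insert.1 hx with rfl | hx
        · exact hafv
        · rw [Finset.mem_singleton] at hx; subst hx; exact hatv
      have heqq : ({af + 1, at' + 1} : Finset ℕ) = occFin v w := by
        apply Finset.eq_of_subset_of_card_le hsub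
        rw [hvocc2, Finset.card_insert_of_notMem (by simp [hafat]; omega), Finset.card_singleton]
      rw [← heqq] at hiv
      rcases Finset.mem_insert.1 hiv with h | h
      · omega
      · rw [Finset.mem_singleton] at h; omega
    -- j ≤ K (v is right special, both occurrences are followed by a letter)
    have hjK : j ≤ Kp w := by
      obtain ⟨bf, hbf⟩ := infix_iff_occFin.1 hvRS.1
      obtain ⟨bt, hbt⟩ := infix_iff_occFin.1 hvRS.2
      have hbfv : bf ∈ occFin v w := mem_occFin_of_prefix (List.prefix_append v [false]) hbf
      have hbtv : bt ∈ occFin v w := mem_occFin_of_prefix (List.prefix_append v [true]) hbt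
      have hbflen : bf + Rp w ≤ w.length := by
        have h' := (mem_occFin.1 hbf).1
        rw [List.length_append, hvlen] at h'
        simp only [List.length_singleton] at h'
        omega
      have hbtlen : bt + Rp w ≤ w.length := by
        have h' := (mem_occFin.1 hbt).1
        rw [List.length_append, hvlen] at h'
        simp only [List.length_singleton] at h'
        omega
      have hbfbt : bf ≠ bt := by
        intro hc
        have h1 := (mem_occFin.1 hbf).2
        have h2 := (mem_occFin.1 hbt).2
        rw [hc] at h1
        rw [show (v ++ [false]).length = (v ++ [true]).length from by simp] at h1
        rw [h1] at h2
        simp at h2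
      have hsub : ({bf, bt} : Finset ℕ) ⊆ occFin v w := by
        intro x hx
        rcases Finset.mem_insert.1 hx with rfl | hx
        · exact hbfv
        · rw [Finset.mem_singleton] at hx; subst hx; exact hbtv
      have heqq : ({bf, bt} : Finset ℕ) = occFin v w := by
        apply Finset.eq_of_subset_of_card_le hsub
        rw [hvocc2, Finset.card_insert_of_notMem (by simp [hbfbt]), Finset.card_singleton]
      rw [← heqq] at hjv
      rcases Finset.mem_insert.1 hjv with h | h
      · omega
      · rw [Finset.mem_singleton] at h; omega
    -- the period q and the window equalities
    have hq1 : 1 ≤ j - i := by omega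
    have hwin : ∀ t, t ≤ Rp w - Kp w →
        fac w (i + t) (Kp w - 1) = fac w (j + t) (Kp w - 1) := by
      intro t ht
      rw [fac_fac hvi (by omega), fac_fac hvj (by omega)]
    have hmod : ∀ t, t ≤ (Rp w - Kp w) + (j - i) →
        fac w (i + t) (Kp w - 1) = fac w (i + t % (j - i)) (Kp w - 1) := by
      intro t
      induction t using Nat.strong_induction_on with
      | _ t ih =>
        intro ht
        by_cases hlt : t < j - i
        · rw [Nat.mod_eq_of_lt hlt]
        · push_neg at hlt
          have h1 : i + t = j + (t - (j - i)) := by omega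
          have h2 : fac w (i + t) (Kp w - 1) = fac w (i + (t - (j - i))) (Kp w - 1) := by
            rw [h1, ← hwin (t - (j - i)) (by omega)]
          have h3 : t % (j - i) = (t - (j - i)) % (j - i) := by
            conv_lhs => rw [show t = (t - (j - i)) + (j - i) by omega]
            rw [Nat.add_mod_right]
          rw [h2, ih (t - (j - i)) (by omega) (by omega), h3]
    -- the prefix and suffix as windows
    have hp'fac : w.take (Kp w - 1) = fac w (i + (Rp w - Kp w)) (Kp w - 1) := by
      have h1 : fac w (i + (Rp w - Kp w)) (Kp w - 1) = fac v (Rp w - Kp w) (Kp w - 1) :=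
        fac_fac hvi (by omega)
      have h2 : fac v (Rp w - Kp w) (Kp w - 1) = v.drop (Rp w - Kp w) := by
        rw [fac]
        exact List.take_of_length_le (by rw [List.length_drop, hvlen]; omega)
      rw [hp'drop, h1, h2]
    have hs'fac : fac w (Rp w + 1) (Kp w - 1) = w.drop (w.length - (Kp w - 1)) := by
      rw [show Rp w + 1 = w.length - (Kp w - 1) by omega]
      exact fac_suffix_eq (by omega)
    have hs'fac2 : w.drop (w.length - (Kp w - 1)) = fac w (i + 0) (Kp w - 1) := by
      have h1 : fac w (i + 0) (Kp w - 1) = fac v 0 (Kp w - 1) := fac_fac hvi (by omega)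
      rw [hs'take, h1, fac_zero]
    -- the position set P
    set D := Rp w - Kp w with hD
    set q := j - i with hq
    set P : Finset ℕ :=
      insert 0 (insert (Rp w + 1) ((Finset.range (D + q + 1)).image (fun t => i + t))) with hPdef
    have himg_card : ((Finset.range (D + q + 1)).image (fun t => i + t)).card = D + q + 1 := by
      rw [Finset.card_image_of_injective _ (add_right_injective i), Finset.card_range]
    have hiDq : i + D + q ≤ Rp w := by omega
    have hR1notin : (Rp w + 1) ∉ (Finset.range (D + q + 1)).image (fun t => i + t) := by
      intro hc
      obtain ⟨t, ht, hte⟩ := Finset.mem_image.1 hc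
      rw [Finset.mem_range] at ht
      omega
    have h0notin : (0 : ℕ) ∉
        insert (Rp w + 1) ((Finset.range (D + q + 1)).image (fun t => i + t)) := by
      intro hc
      rcases Finset.mem_insert.1 hc with hc | hc
      · omega
      · obtain ⟨t, ht, hte⟩ := Finset.mem_image.1 hc
        omega
    have hPcard : P.card = D + q + 3 := by
      rw [hPdef, Finset.card_insert_of_notMem h0notin,
        Finset.card_insert_of_notMem hR1notin, himg_card]
    have hPvalid : ∀ p ∈ P, p + (Kp w - 1) ≤ w.length := by
      intro p hp
      rw [hPdef] at hp
      rcases Finset.mem_insert.1 hp with rfl | hp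
      · omega
      · rcases Finset.mem_insert.1 hp with rfl | hp
        · omega
        · obtain ⟨t, ht, rfl⟩ := Finset.mem_image.1 hp
          rw [Finset.mem_range] at ht
          omega
    -- the words at positions of P are among at most q distinct windows
    have hWsub2 : P.image (fun p => fac w p (Kp w - 1)) ⊆
        (Finset.range q).image (fun r => fac w (i + r) (Kp w - 1)) := by
      intro u hu
      obtain ⟨p, hp, rfl⟩ := Finset.mem_image.1 hu
      rw [hPdef] at hp
      rcases Finset.mem_insert.1 hp with rfl | hp
      · refine Finset.mem_image.2 ⟨D % q, Finset.mem_range.2 (Nat.mod_lt _ (by omega)), ?_⟩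
        rw [← hmod D (by omega), ← hp'fac, fac_zero]
      · rcases Finset.mem_insert.1 hp with rfl | hp
        · refine Finset.mem_image.2 ⟨0, Finset.mem_range.2 (by omega), ?_⟩
          rw [hs'fac, hs'fac2]
        · obtain ⟨t, ht, rfl⟩ := Finset.mem_image.1 hp
          rw [Finset.mem_range] at ht
          refine Finset.mem_image.2 ⟨t % q, Finset.mem_range.2 (Nat.mod_lt _ (by omega)), ?_⟩
          exact (hmod t (by omega)).symm
    have hWcard : (P.image (fun p => fac w p (Kp w - 1))).card ≤ q := by
      calc (P.image (fun p => fac w p (Kp w - 1))).card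
          ≤ ((Finset.range q).image (fun r => fac w (i + r) (Kp w - 1))).card :=
            Finset.card_le_card hWsub2
      _ ≤ (Finset.range q).card := Finset.card_image_le
      _ = q := Finset.card_range q
    have hexc := excess (w := w) (m := Kp w - 1) (by omega) P hPvalid
    have hflow : Kp w ≤ (facFin w (Kp w - 1)).card := by
      have := f_lower (w := w) (m := Kp w - 1) (by omega) (by omega)
      omega
    omega
  obtain ⟨x, y, hxy, hxypair⟩ := Finset.card_eq_two.1 hvocc2
  rcases lt_or_gt_of_ne hxy with hlt | hlt
  · exact main x y hlt hxypair
  · exact main y x hlt (by rw [hxypair, Finset.pair_comm])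

end OCP

open OCP in
/-- For a trapezoidal word `w`: if `w` is open then `H_w = R_w` and `K_w = L_w`;
if `w` is closed then `H_w = K_w` and `L_w = R_w`. -/
theorem open_closed_parameters (w : Word) (htrap : Trapezoidal w) :
    (¬ ClosedWord w → Hp w = Rp w ∧ Kp w = Lp w) ∧
    (ClosedWord w → Hp w = Kp w ∧ Lp w = Rp w) := by
  constructor
  · intro hop
    refine ⟨open_Hp_eq_Rp htrap hop, ?_⟩
    have hoprev : ¬ ClosedWord w.reverse := by
      intro hc
      have := closedWord_reverse hc
      rw [List.reverse_reverse] at this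
      exact hop this
    have h1 := open_Hp_eq_Rp (trapezoidal_reverse htrap) hoprev
    rwa [Hp_reverse, Rp_reverse] at h1
  · intro hcl
    have h1 : Hp w = Kp w := closed_Hp_eq_Kp hcl
    have h2 := length_eq_Rp_add_Kp htrap
    have h3 := length_eq_Lp_add_Hp htrap
    exact ⟨h1, by omega⟩
end

section
/- Let w be a nonempty prefix of the Fibonacci infinite word (equivalently, a nonempty prefix of s_n for some n, where s_1 = a, s_2 = ab, and s_{n+1} = s_n·s_{n−1}). Then w is open if and only if there exists an index i ≥ 1 such that F_{i+1} − 1 ≤ |w| ≤ 2·F_i − 2. -/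
open List

/-- The finite Fibonacci words: `s₁ = a`, `s₂ = ab`, `sₙ₊₁ = sₙ · sₙ₋₁`
(with `a = false`, `b = true`). -/
def fibWord : ℕ → Word
  | 0 => []
  | 1 => [false]
  | 2 => [false, true]
  | n + 3 => fibWord (n + 2) ++ fibWord (n + 1)


lemma fibWord_length : ∀ n, 1 ≤ n → (fibWord n).length = Nat.fib (n+1)
  | 1, _ => rfl
  | 2, _ => rfl
  | (n+3), _ => by
    rw [fibWord, List.length_append, fibWord_length (n+2) (by omega),
      fibWord_length (n+1) (by omega)]
    show Nat.fib (n+3) + Nat.fib (n+2) = Nat.fib (n+4)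
    have : Nat.fib (n + 4) = Nat.fib (n + 2) + Nat.fib (n + 3) := Nat.fib_add_two (n := n+2)
    omega

lemma fibWord_prefix_succ : ∀ n, 1 ≤ n → fibWord n <+: fibWord (n+1)
  | 1, _ => ⟨[true], rfl⟩
  | (n+2), _ => ⟨fibWord (n+1), rfl⟩

lemma fibWord_prefix {a b : ℕ} (ha : 1 ≤ a) (hab : a ≤ b) : fibWord a <+: fibWord b := by
  induction b with
  | zero => omega
  | succ b ih =>
    rcases Nat.lt_or_ge a (b+1) with h | h
    · exact (ih (by omega)).trans (fibWord_prefix_succ b (by omega))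
    · have : a = b + 1 := by omega
      subst this; exact List.prefix_refl _

lemma self_le_fib (n : ℕ) : n ≤ Nat.fib (n + 2) := by
  induction n with
  | zero => simp
  | succ n ih =>
    show n + 1 ≤ Nat.fib (n + 3)
    have h1 : 1 ≤ Nat.fib (n + 1) := Nat.fib_pos.mpr (by omega)
    have : Nat.fib (n + 3) = Nat.fib (n + 1) + Nat.fib (n + 2) := Nat.fib_add_two (n := n+1)
    omega

/-- the infinite Fibonacci word -/
def fw (i : ℕ) : Bool := (fibWord (i+3)).getD i false

lemma lt_fibWord_length (i : ℕ) : i < (fibWord (i+3)).length := by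
  rw [fibWord_length _ (by omega)]
  have h1 := self_le_fib (i+1)
  have h2 : Nat.fib (i+1+2) ≤ Nat.fib (i+3+1) := Nat.fib_mono (by omega)
  omega

lemma fw_eq (i : ℕ) : fw i = (fibWord (i+3))[i]'(lt_fibWord_length i) := by
  rw [fw, List.getD_eq_getElem]

lemma fibWord_getElem_eq_fw {n i : ℕ} (hn : 1 ≤ n) (hi : i < (fibWord n).length) :
    (fibWord n)[i] = fw i := by
  rcases Nat.le_total n (i+3) with h | h
  · rw [fw_eq]; exact (fibWord_prefix hn h).getElem hi
  · rw [fw_eq]; exact ((fibWord_prefix (by omega) h).getElem (lt_fibWord_length i)).symm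

/-- near-commutation -/
lemma nearComm : ∀ k, 1 ≤ k → ∃ (t : Word) (x : Bool),
    fibWord (k+1) ++ fibWord k = t ++ [x, !x] ∧ fibWord k ++ fibWord (k+1) = t ++ [!x, x]
  | 1, _ => ⟨[false], true, rfl, rfl⟩
  | (k+2), _ => by
    obtain ⟨t, x, h1, h2⟩ := nearComm (k+1) (by omega)
    refine ⟨fibWord (k+2) ++ t, !x, ?_, ?_⟩
    · show (fibWord (k+2) ++ fibWord (k+1)) ++ fibWord (k+2) = _
      rw [List.append_assoc, h2]; simp
    · show fibWord (k+2) ++ (fibWord (k+2) ++ fibWord (k+1)) = _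
      rw [h1]; simp

lemma fib_fact (n : ℕ) : Nat.fib (n+2) = Nat.fib n + Nat.fib (n+1) := Nat.fib_add_two

lemma P1 : ∀ k i, i + Nat.fib k + 3 ≤ Nat.fib (k+2) → fw (i + Nat.fib k) = fw i := by
  intro k i h
  match k with
  | 0 =>
    simp only [show (0:ℕ)+2 = 2 from rfl] at h
    have : Nat.fib 2 = 1 := by decide
    have : Nat.fib 0 = 0 := rfl
    omega
  | 1 =>
    simp only [show (1:ℕ)+2 = 3 from rfl] at h
    have : Nat.fib 3 = 2 := by decide
    have : Nat.fib 1 = 1 := rfl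
    omega
  | 2 =>
    simp only [show (2:ℕ)+2 = 4 from rfl] at h
    have : Nat.fib 4 = 3 := by decide
    have : Nat.fib 2 = 1 := by decide
    omega
  | (m+3) =>
    obtain ⟨t, x, h1, h2⟩ := nearComm (m+1) (by omega)
    set A := fibWord (m+2) with hA
    set B := fibWord (m+1) with hB
    have hlenA : A.length = Nat.fib (m+3) := fibWord_length (m+2) (by omega)
    have hlenB : B.length = Nat.fib (m+2) := fibWord_length (m+1) (by omega)
    have hlent : t.length + 2 = Nat.fib (m+3) + Nat.fib (m+2) := by
      have := congrArg List.length h1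
      simp at this; omega
    have hfib4 : Nat.fib (m+4) = Nat.fib (m+2) + Nat.fib (m+3) := fib_fact (m+2)
    have hfib5 : Nat.fib (m+5) = Nat.fib (m+3) + Nat.fib (m+4) := fib_fact (m+3)
    have hkey : Nat.fib (m+3+2) = Nat.fib (m+5) := rfl
    have hit : i < t.length := by omega
    have hW : fibWord (m+4) = (A ++ B) ++ A := rfl
    have hW2 : fibWord (m+4) = A ++ (B ++ A) := by rw [hW, List.append_assoc]
    have hlen4 : (fibWord (m+4)).length = Nat.fib (m+5) := fibWord_length (m+4) (by omega)
    have e1 : fw i = t[i] := by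
      rw [← fibWord_getElem_eq_fw (n := m+4) (by omega) (by omega)]
      rw [List.getElem_of_eq hW (by omega)]
      rw [List.getElem_append_left (by simp; omega)]
      rw [List.getElem_of_eq h1 (by simp; omega)]
      rw [List.getElem_append_left hit]
    have e2 : fw (i + Nat.fib (m+3)) = t[i] := by
      rw [← fibWord_getElem_eq_fw (n := m+4) (by omega) (by omega)]
      rw [List.getElem_of_eq hW2 (by omega)]
      rw [List.getElem_append_right (by omega)]
      have hidx : i + Nat.fib (m+3) - A.length = i := by omega
      simp only [hidx]
      rw [List.getElem_of_eq h2 (by simp; omega)]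
      rw [List.getElem_append_left hit]
    rw [e1, e2]

lemma lastTwo : ∀ k, 2 ≤ k →
    ∃ t : Word, fibWord k = t ++ (if Even k then [false, true] else [true, false])
  | 2, _ => ⟨[], by norm_num [fibWord]⟩
  | 3, _ => ⟨[false], by norm_num [fibWord]⟩
  | (k+4), _ => by
    obtain ⟨t, ht⟩ := lastTwo (k+2) (by omega)
    refine ⟨fibWord (k+3) ++ t, ?_⟩
    have h1 : fibWord (k+4) = fibWord (k+3) ++ fibWord (k+2) := rfl
    have h2 : Even (k+4) ↔ Even (k+2) := by
      constructor
      · rintro ⟨c, hc⟩; exact ⟨c-1, by omega⟩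
      · rintro ⟨c, hc⟩; exact ⟨c+1, by omega⟩
    rw [h1, ht, List.append_assoc]
    by_cases he : Even (k+2)
    · rw [if_pos he, if_pos (h2.mpr he)]
    · rw [if_neg he, if_neg (fun hh => he (h2.mp hh))]

lemma fib_ge_two {k : ℕ} (hk : 2 ≤ k) : 2 ≤ Nat.fib (k+1) := by
  have : Nat.fib 3 ≤ Nat.fib (k+1) := Nat.fib_mono (by omega)
  have : Nat.fib 3 = 2 := by decide
  omega

lemma fw_secondlast {k : ℕ} (hk : 2 ≤ k) :
    fw (Nat.fib (k+1) - 2) = (if Even k then false else true) := by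
  obtain ⟨t, ht⟩ := lastTwo k hk
  have hlen : (fibWord k).length = Nat.fib (k+1) := fibWord_length k (by omega)
  have h2 : 2 ≤ Nat.fib (k+1) := fib_ge_two hk
  have hlt : Nat.fib (k+1) - 2 < (fibWord k).length := by omega
  have hlent : t.length = Nat.fib (k+1) - 2 := by
    have := congrArg List.length ht
    rw [hlen] at this
    by_cases he : Even k <;> simp [he] at this <;> omega
  rw [← fibWord_getElem_eq_fw (n := k) (by omega) hlt]
  rw [List.getElem_of_eq ht (by omega)]
  rw [List.getElem_append_right (by omega)]
  by_cases he : Even k <;> simp [he, hlent]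

lemma P2 {k : ℕ} (hk : 2 ≤ k) : fw (Nat.fib (k+2) - 2) ≠ fw (Nat.fib (k+1) - 2) := by
  rw [fw_secondlast hk, fw_secondlast (show 2 ≤ k + 1 by omega)]
  by_cases he : Even k
  · have : ¬ Even (k+1) := by simp [Nat.even_add_one, he]
    simp [he, this]
  · have : Even (k+1) := by simp [Nat.even_add_one, he]
    simp [he, this]

/-- `p_m` occurs at position `t` in the infinite Fibonacci word. -/
def OccAt (m t : ℕ) : Prop := ∀ i, i < m → fw (t + i) = fw i

lemma occAt_mono {m m' t : ℕ} (h : m' ≤ m) (ho : OccAt m t) : OccAt m' t :=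
  fun i hi => ho i (by omega)

lemma OccPos {k m : ℕ} (hk : 2 ≤ k) (hm : m + 2 ≤ Nat.fib (k+1)) : OccAt m (Nat.fib k) := by
  intro i hi
  rw [Nat.add_comm]
  exact P1 k i (by have := fib_fact k; omega)

lemma OCC : ∀ k, 2 ≤ k → ∀ t, 0 < t → t < Nat.fib (k+1) →
    OccAt (Nat.fib k - 1) t → t = Nat.fib k := by
  intro k
  induction k with
  | zero => omega
  | succ k ih =>
    intro hk2 t ht0 htlt hocc
    rcases Nat.lt_or_ge k 3 with hk3 | hk3
    · rcases (by omega : k = 1 ∨ k = 2) with rfl | rfl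
      · have e3 : Nat.fib (1+1+1) = 2 := by decide
        have e2 : Nat.fib (1+1) = 1 := by decide
        omega
      · have h4 : Nat.fib (2+1+1) = 3 := by decide
        have h3 : Nat.fib (2+1) = 2 := by decide
        have h1 := hocc 0 (by omega)
        simp only [Nat.add_zero] at h1
        rcases (by omega : t = 1 ∨ t = 2) with rfl | rfl
        · have e1 : fw 1 = true := by decide
          have e0 : fw 0 = false := by decide
          rw [e0, e1] at h1; exact absurd h1 (by simp)
        · omega
    · -- k ≥ 3, prove for k+1 using ih for k
      have htlt2 : t < Nat.fib (k+2) := htlt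
      clear htlt
      have hkk : 2 ≤ k := by omega
      have hmono : Nat.fib k ≤ Nat.fib (k+1) := Nat.fib_le_fib_succ
      have hfibk : 2 ≤ Nat.fib (k+1) := fib_ge_two hkk
      have hf1 : Nat.fib (k+2) = Nat.fib k + Nat.fib (k+1) := fib_fact k
      have hf2 : Nat.fib (k+3) = Nat.fib (k+1) + Nat.fib (k+2) := fib_fact (k+1)
      have hfkpos : 0 < Nat.fib k := Nat.fib_pos.mpr (by omega)
      rcases Nat.lt_or_ge t (Nat.fib (k+1)) with hcase | hcase
      · -- t < fib (k+1): apply ih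
        have h2 : OccAt (Nat.fib k - 1) t :=
          occAt_mono (by have : Nat.fib k ≤ Nat.fib (k+1) := Nat.fib_le_fib_succ; omega) hocc
        have heq : t = Nat.fib k := ih hkk t ht0 hcase h2
        exfalso
        apply P2 hkk
        have := hocc (Nat.fib (k+1) - 2) (by omega)
        rw [heq] at this
        have harg : Nat.fib k + (Nat.fib (k+1) - 2) = Nat.fib (k+2) - 2 := by omega
        rw [harg] at this
        exact this
      · -- fib (k+1) ≤ t < fib (k+2): pull back by period fib (k+1)
        have hpull : OccAt (Nat.fib k - 1) (t - Nat.fib (k+1)) := by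
          intro i hi
          have h1 : fw (t - Nat.fib (k+1) + i) = fw (t + i) := by
            have he : t - Nat.fib (k+1) + i + Nat.fib (k+1) = t + i := by omega
            rw [← he]
            exact (P1 (k+1) (t - Nat.fib (k+1) + i) (by
              have hn : Nat.fib (k+1+2) = Nat.fib (k+3) := rfl
              omega)).symm
          rw [h1]
          exact hocc i (by
            have : Nat.fib k ≤ Nat.fib (k+1) := Nat.fib_le_fib_succ
            omega)
        rcases Nat.eq_zero_or_pos (t - Nat.fib (k+1)) with hz | hp
        · omega
        · have := ih hkk (t - Nat.fib (k+1)) hp (by omega) hpull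
          omega

/-- every m lies in exactly one interval [fib k - 1, fib (k+1) - 2] -/
lemma find_k : ∀ m : ℕ, ∃ k, 2 ≤ k ∧ Nat.fib k ≤ m + 1 ∧ m + 2 ≤ Nat.fib (k+1) := by
  intro m
  induction m with
  | zero => exact ⟨2, by omega, by decide, by decide⟩
  | succ m ih =>
    obtain ⟨k, hk2, h1, h2⟩ := ih
    rcases Nat.lt_or_ge (m + 3) (Nat.fib (k+1) + 1) with h | h
    · exact ⟨k, hk2, by omega, by omega⟩
    · refine ⟨k+1, by omega, by omega, ?_⟩
      have hd : Nat.fib (k+1+1) = Nat.fib (k+2) := rfl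
      have := fib_fact k
      have : 0 < Nat.fib k := Nat.fib_pos.mpr (by omega)
      omega

lemma prefix_getElem_fw {w : Word} {n : ℕ} (hn : 1 ≤ n) (hw : w <+: fibWord n)
    {i : ℕ} (hi : i < w.length) : w[i] = fw i := by
  rw [hw.getElem hi]
  exact fibWord_getElem_eq_fw hn (hi.trans_le hw.length_le)

lemma occ_char {w : Word} {n : ℕ} (hn : 1 ≤ n) (hw : w <+: fibWord n) {m i : ℕ}
    (him : i + m ≤ w.length) :
    (w.drop i).take m = w.take m ↔ OccAt m i := by
  have hlen1 : ((w.drop i).take m).length = m := by simp; omega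
  have hlen2 : (w.take m).length = m := by simp; omega
  constructor
  · intro h j hj
    have e1 : ((w.drop i).take m)[j]'(by omega) = w[i+j]'(by omega) := by
      rw [List.getElem_take, List.getElem_drop]
    have e2 : (w.take m)[j]'(by omega) = w[j]'(by omega) := by
      rw [List.getElem_take]
    calc fw (i + j) = w[i+j]'(by omega) := (prefix_getElem_fw hn hw (by omega)).symm
      _ = ((w.drop i).take m)[j]'(by omega) := e1.symm
      _ = (w.take m)[j]'(by omega) := List.getElem_of_eq h (by omega)
      _ = w[j]'(by omega) := e2
      _ = fw j := prefix_getElem_fw hn hw (by omega)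
  · intro h
    apply List.ext_getElem (by omega)
    intro j h1 h2
    have e1 : ((w.drop i).take m)[j]'h1 = w[i+j]'(by omega) := by
      rw [List.getElem_take, List.getElem_drop]
    have e2 : (w.take m)[j]'h2 = w[j]'(by omega) := by
      rw [List.getElem_take]
    rw [e1, e2, prefix_getElem_fw hn hw (by omega), prefix_getElem_fw hn hw (by omega)]
    exact h j (by omega)

lemma occ_eq_ncard {w : Word} {n : ℕ} (hn : 1 ≤ n) (hw : w <+: fibWord n) {m : ℕ}
    (hm : m ≤ w.length) :
    occ (w.take m) w = {i : ℕ | i + m ≤ w.length ∧ OccAt m i}.ncard := by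
  have hlen : (w.take m).length = m := by simp; omega
  rw [occ, hlen]
  congr 1
  ext i
  simp only [Set.mem_setOf_eq]
  constructor
  · rintro ⟨h1, h2⟩; exact ⟨h1, (occ_char hn hw h1).mp h2⟩
  · rintro ⟨h1, h2⟩; exact ⟨h1, (occ_char hn hw h1).mpr h2⟩

/-- closed ranges: 2F_j - 1 ≤ N ≤ F_{j+2} - 2 implies closed -/
lemma closed_of_range {w : Word} {n : ℕ} (hn : 1 ≤ n) (hw : w <+: fibWord n) {j : ℕ}
    (hj : 2 ≤ j) (hlo : 2 * Nat.fib j ≤ w.length + 1) (hhi : w.length + 2 ≤ Nat.fib (j+2)) :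
    ClosedWord w := by
  set N := w.length with hN
  have hfj : 1 ≤ Nat.fib j := Nat.fib_pos.mpr (by omega)
  have hff : Nat.fib (j+2) = Nat.fib j + Nat.fib (j+1) := fib_fact j
  set m := N - Nat.fib j with hm
  have hmN : m + Nat.fib j = N := by omega
  have hm2 : m + 2 ≤ Nat.fib (j+1) := by omega
  have hocc : OccAt m (Nat.fib j) := OccPos hj hm2
  right
  refine ⟨w.take m, ?_, List.take_prefix m w, ?_, ?_⟩
  · intro hcon
    have := congrArg List.length hcon
    simp at this; omega
  · -- suffix
    have heq : w.take m = w.drop (Nat.fib j) := by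
      apply List.ext_getElem (by simp; omega)
      intro i h1 h2
      have h1' : i < m := by have := h1; simp only [List.length_take] at this; omega
      have h2' : i + Nat.fib j < w.length := by
        have := h2; simp only [List.length_drop] at this; omega
      have e2 : (w.drop (Nat.fib j))[i]'h2 = w[Nat.fib j + i]'(by omega) := by
        rw [List.getElem_drop]
      have e1 : (w.take m)[i]'h1 = w[i]'(by omega) := by rw [List.getElem_take]
      rw [e1, e2, prefix_getElem_fw hn hw (by omega), prefix_getElem_fw hn hw (by omega)]
      exact (hocc i (by omega)).symm
    rw [heq]
    exact List.drop_suffix _ _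
  · rw [occ_eq_ncard hn hw (by omega)]
    have hset : {i : ℕ | i + m ≤ N ∧ OccAt m i} = {0, Nat.fib j} := by
      ext i
      simp only [Set.mem_setOf_eq, Set.mem_insert_iff, Set.mem_singleton_iff]
      constructor
      · rintro ⟨h1, h2⟩
        rcases Nat.eq_zero_or_pos i with rfl | hip
        · left; rfl
        · right
          have hfmono : Nat.fib j < Nat.fib (j+1) := by
            have := Nat.fib_lt_fib_succ (n := j) (by omega)
            exact this
          apply OCC j hj i hip (by omega)
          exact occAt_mono (by omega) h2
      · rintro (rfl | rfl)
        · exact ⟨by omega, fun i hi => by rw [Nat.zero_add]⟩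
        · exact ⟨by omega, hocc⟩
    rw [hset]
    exact Set.ncard_pair (by omega)

/-- open ranges: F_{j+1} - 1 ≤ N ≤ 2F_j - 2 implies not closed -/
lemma open_of_range {w : Word} {n : ℕ} (hn : 1 ≤ n) (hw : w <+: fibWord n)
    (hne : w ≠ []) {j : ℕ} (hj : 1 ≤ j)
    (hlo : Nat.fib (j+1) ≤ w.length + 1) (hhi : w.length + 2 ≤ 2 * Nat.fib j) :
    ¬ ClosedWord w := by
  set N := w.length with hN
  have hN1 : 1 ≤ N := by
    cases w with
    | nil => exact absurd rfl hne
    | cons a l => simp [hN]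
  have hj3 : 3 ≤ j := by
    by_contra hcon
    interval_cases j <;> simp [Nat.fib] at hhi <;> omega
  rintro (rfl | ⟨u, hune, hupre, husuf, huocc⟩)
  · exact hne rfl
  · set m := u.length with hm
    have hmle : m ≤ N := hupre.length_le
    have hmlt : m < N := by
      rcases Nat.lt_or_ge m N with h | h
      · exact h
      · exact absurd (hupre.eq_of_length (by omega)) hune
    have hueq : u = w.take m := List.prefix_iff_eq_take.mp hupre
    -- occurrence at t = N - m from suffix
    set t := N - m with ht
    have hocc_t : OccAt m t := by
      intro i hi
      have husuf' : u = w.drop t := by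
        have := List.suffix_iff_eq_drop.mp husuf
        rwa [← hm, ← ht] at this
      have e1 : u[i]'(by omega) = w[t + i]'(by omega) := by
        rw [List.getElem_of_eq husuf' (by omega), List.getElem_drop]
      have e2 : u[i]'(by omega) = w[i]'(by omega) := by
        rw [List.getElem_of_eq hueq (by omega), List.getElem_take]
      rw [← prefix_getElem_fw hn hw (show t + i < N by omega), ← e1, e2]
      exact prefix_getElem_fw hn hw (by omega)
    obtain ⟨k, hk2, hfk1, hfk2⟩ := find_k m
    have hfibkpos : 1 ≤ Nat.fib k := Nat.fib_pos.mpr (by omega)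
    have hfibjpos : 1 ≤ Nat.fib j := Nat.fib_pos.mpr (by omega)
    rcases Nat.lt_or_ge t (Nat.fib (k+1)) with hcase | hcase
    · -- t = fib k, N in closed range: contradiction with open range
      have heq : t = Nat.fib k :=
        OCC k hk2 t (by omega) hcase (occAt_mono (by omega) hocc_t)
      have hNlo : 2 * Nat.fib k ≤ N + 1 := by omega
      have hNhi : N + 2 ≤ Nat.fib (k+2) := by
        have := fib_fact k; omega
      rcases Nat.lt_or_ge k j with h | h
      · have : Nat.fib (k+2) ≤ Nat.fib (j+1) := Nat.fib_mono (by omega)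
        omega
      · have : Nat.fib j ≤ Nat.fib k := Nat.fib_mono h
        omega
    · -- three occurrences: 0, fib k, t
      have hocc_fk : OccAt m (Nat.fib k) := OccPos hk2 hfk2
      have hflt : Nat.fib k < Nat.fib (k+1) := Nat.fib_lt_fib_succ (n := k) (by omega)
      have hsub : ({0, Nat.fib k, t} : Set ℕ) ⊆ {i : ℕ | i + m ≤ N ∧ OccAt m i} := by
        rintro i (rfl | rfl | rfl)
        · exact ⟨by omega, fun i hi => by rw [Nat.zero_add]⟩
        · exact ⟨by omega, hocc_fk⟩
        · exact ⟨by omega, hocc_t⟩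
      have hfin : ({i : ℕ | i + m ≤ N ∧ OccAt m i}).Finite :=
        (Set.finite_Iic N).subset (fun i hi => by simp only [Set.mem_setOf_eq] at hi
                                                  simp [Set.mem_Iic]; omega)
      have h3 : ({0, Nat.fib k, t} : Set ℕ).ncard = 3 := by
        rw [Set.ncard_insert_of_notMem (by simp; omega)
            ((Set.finite_singleton t).insert _), Set.ncard_pair (by omega)]
      have hle : ({0, Nat.fib k, t} : Set ℕ).ncard ≤
          ({i : ℕ | i + m ≤ N ∧ OccAt m i}).ncard := Set.ncard_le_ncard hsub hfin
      rw [hueq, occ_eq_ncard hn hw (by omega)] at huocc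
      rw [← hN] at huocc
      omega

/-- A nonempty prefix `w` of the Fibonacci infinite word is open if and only if
`F_{i+1} - 1 ≤ |w| ≤ 2F_i - 2` for some `i ≥ 1`. -/
theorem fibonacci_prefix_open_iff (w : Word) (hne : w ≠ [])
    (hpre : ∃ n : ℕ, 1 ≤ n ∧ w <+: fibWord n) :
    ¬ ClosedWord w ↔
      ∃ i : ℕ, 1 ≤ i ∧ Nat.fib (i + 1) - 1 ≤ w.length ∧ w.length ≤ 2 * Nat.fib i - 2 := by
  obtain ⟨n, hn, hw⟩ := hpre
  set N := w.length with hN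
  have hN1 : 1 ≤ N := by
    cases w with
    | nil => exact absurd rfl hne
    | cons a l => simp [hN]
  constructor
  · intro hopen
    obtain ⟨k, hk2, h1, h2⟩ := find_k N
    have hk3 : 3 ≤ k := by
      rcases Nat.lt_or_ge k 3 with h | h
      · obtain rfl : k = 2 := by omega
        have : Nat.fib (2+1) = 2 := by decide
        omega
      · exact h
    obtain ⟨j, rfl⟩ : ∃ j, k = j + 1 := ⟨k - 1, by omega⟩
    rcases Nat.lt_or_ge (N + 1) (2 * Nat.fib j) with h | h
    · refine ⟨j, by omega, by omega, by omega⟩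
    · exfalso
      exact hopen (closed_of_range hn hw (j := j) (by omega) (by omega)
        (by have hh : Nat.fib (j+2) = Nat.fib (j+1+1) := rfl; omega))
  · rintro ⟨i, hi1, hlo, hhi⟩
    have hfib : 1 ≤ Nat.fib i := Nat.fib_pos.mpr (by omega)
    have h2 : N + 2 ≤ 2 * Nat.fib i := by omega
    have h1 : Nat.fib (i+1) ≤ N + 1 := by omega
    exact open_of_range hn hw hne hi1 h1 h2
end
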